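/- arXiv:1712.07191 — 5 statements merged into one kernel-verified Lean document; each statement's English description precedes it below -/
import Mathlib

section
/- Let G be a group, let A, B ≤ G be subgroups, let φ: B → A be a group isomorphism, and let k ≥ 1 be an integer. Then the following are equivalent: (1) there exist a sofic group Q and a surjective homomorphism Hig_k(G,φ) → Q such that the composition of the natural map ι: G → Hig_k(G,φ) with Hig_k(G,φ) → Q is injective; (2) for every finite subset S ⊆ G and all δ, ε > 0 there exist n ∈ ℕ, an (S,δ,n)-approximation ψ of G, and a permutation f ∈ Sym(n) with f^k = id such that d(ψ(b) ∘ f, f ∘ ψ(φ(b))) < ε for every b ∈ S ∩ B with φ(b) ∈ S. -/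
universe u

/-- The normalized Hamming distance on the symmetric group `Sym(n)`. -/
noncomputable def permDist {n : ℕ} (ρ σ : Equiv.Perm (Fin n)) : ℝ :=
  ((Finset.univ.filter fun i => ρ i ≠ σ i).card : ℝ) / n

/-- `ψ : G → Sym(n)` is an `(S, δ, n)`-approximation of `G`. -/
def IsApprox {G : Type*} [Group G] (S : Set G) (δ : ℝ) {n : ℕ}
    (ψ : G → Equiv.Perm (Fin n)) : Prop :=
  (∀ g ∈ S, ∀ h ∈ S, g * h ∈ S → permDist (ψ g * ψ h) (ψ (g * h)) < δ) ∧
  (∀ g ∈ S, g ≠ 1 → 1 - δ < permDist (ψ g) 1)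

/-- A group is sofic when for every finite subset `S` and every `δ > 0` there is an
`(S,δ,n)`-approximation for some `n`. -/
def IsSofic (G : Type*) [Group G] : Prop :=
  ∀ S : Set G, S.Finite → ∀ δ : ℝ, 0 < δ →
    ∃ (n : ℕ) (ψ : G → Equiv.Perm (Fin n)), IsApprox S δ ψ

variable (G : Type u) [Group G] (A B : Subgroup G) (φ : B ≃* A) (k : ℕ)

/-- The stable generator `t` inside the free product `G ∗ ⟨t⟩`. -/
def higT : Monoid.Coprod G (FreeGroup Unit) := Monoid.Coprod.inr (FreeGroup.of ())

/-- Defining relators of `Hig_k(G, φ)`:  `t^k` and `t⁻¹ b t φ(b)⁻¹` for `b ∈ B`. -/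
def higRels : Set (Monoid.Coprod G (FreeGroup Unit)) :=
  {higT G ^ k} ∪
    ⋃ b : B, {(higT G)⁻¹ * Monoid.Coprod.inl (b : G) * higT G *
      (Monoid.Coprod.inl ((φ b : G)) : Monoid.Coprod G (FreeGroup Unit))⁻¹}

/-- `Hig_k(G, φ) = ⟨G, t ∣ t^k = 1, b^t = φ(b) ∀ b ∈ B⟩`. -/
def Hig : Type u :=
  Monoid.Coprod G (FreeGroup Unit) ⧸ Subgroup.normalClosure (higRels G A B φ k)

instance : Group (Hig G A B φ k) :=
  inferInstanceAs (Group (Monoid.Coprod G (FreeGroup Unit) ⧸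
    Subgroup.normalClosure (higRels G A B φ k)))

/-- The natural map `ι : G → Hig_k(G, φ)`. -/
def higIota : G →* Hig G A B φ k :=
  (QuotientGroup.mk' (Subgroup.normalClosure (higRels G A B φ k))).comp Monoid.Coprod.inl

namespace HigAux

open Finset Equiv

variable {α : Type*} [Fintype α] [DecidableEq α] {β : Type*} [Fintype β] [DecidableEq β]

noncomputable def pdist (ρ σ : Equiv.Perm α) : ℝ :=
  ((Finset.univ.filter fun i => ρ i ≠ σ i).card : ℝ) / (Fintype.card α)

lemma permDist_eq {n : ℕ} (ρ σ : Equiv.Perm (Fin n)) : permDist ρ σ = pdist ρ σ := by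
  simp [permDist, pdist]

lemma pdist_nonneg (ρ σ : Equiv.Perm α) : 0 ≤ pdist ρ σ := by
  apply div_nonneg <;> positivity

lemma pdist_self (ρ : Equiv.Perm α) : pdist ρ ρ = 0 := by
  simp [pdist]

lemma pdist_le_one (ρ σ : Equiv.Perm α) : pdist ρ σ ≤ 1 := by
  apply div_le_one_of_le₀
  · exact_mod_cast (Finset.card_filter_le _ _).trans (le_of_eq (Finset.card_univ))
  · positivity

lemma pdist_comm (ρ σ : Equiv.Perm α) : pdist ρ σ = pdist σ ρ := by
  unfold pdist
  have : (Finset.univ.filter fun i => ρ i ≠ σ i) = (Finset.univ.filter fun i => σ i ≠ ρ i) := by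
    ext i; simp [ne_comm]
  rw [this]

lemma pdist_mono {ρ σ ρ' σ' : Equiv.Perm α}
    (h : ∀ i, ρ i ≠ σ i → ρ' i ≠ σ' i) : pdist ρ σ ≤ pdist ρ' σ' := by
  unfold pdist
  rw [div_eq_mul_inv, div_eq_mul_inv]
  apply mul_le_mul_of_nonneg_right ?_ (by positivity)
  exact_mod_cast Finset.card_le_card (fun i hi => by
      simp only [Finset.mem_filter, Finset.mem_univ, true_and] at *
      exact h i hi)

lemma pdist_triangle (ρ τ σ : Equiv.Perm α) : pdist ρ σ ≤ pdist ρ τ + pdist τ σ := by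
  unfold pdist
  rw [← add_div, div_eq_mul_inv, div_eq_mul_inv]
  apply mul_le_mul_of_nonneg_right ?_ (by positivity)
  · have hsub : (Finset.univ.filter fun i => ρ i ≠ σ i) ⊆
        (Finset.univ.filter fun i => ρ i ≠ τ i) ∪ (Finset.univ.filter fun i => τ i ≠ σ i) := by
      intro i hi
      simp only [Finset.mem_filter, Finset.mem_univ, true_and, Finset.mem_union] at *
      by_contra hc
      push_neg at hc
      exact hi (hc.1.trans hc.2)
    calc ((Finset.univ.filter fun i => ρ i ≠ σ i).card : ℝ)
        ≤ (((Finset.univ.filter fun i => ρ i ≠ τ i) ∪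
            (Finset.univ.filter fun i => τ i ≠ σ i)).card : ℝ) := by
          exact_mod_cast Finset.card_le_card hsub
      _ ≤ _ := by exact_mod_cast Finset.card_union_le _ _

lemma pdist_mul_left (τ ρ σ : Equiv.Perm α) : pdist (τ * ρ) (τ * σ) = pdist ρ σ := by
  unfold pdist
  have : (Finset.univ.filter fun i => (τ * ρ) i ≠ (τ * σ) i)
      = (Finset.univ.filter fun i => ρ i ≠ σ i) := by
    ext i; simp [Equiv.Perm.mul_apply]
  rw [this]

lemma pdist_mul_right (ρ σ τ : Equiv.Perm α) : pdist (ρ * τ) (σ * τ) = pdist ρ σ := by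
  unfold pdist
  congr 2
  apply Finset.card_bij (fun i _ => τ i)
  · intro i hi
    simp only [Finset.mem_filter, Finset.mem_univ, true_and, Equiv.Perm.mul_apply] at *
    exact (Finset.mem_filter.mp hi).2
  · intro i _ j _ hij
    exact τ.injective hij
  · intro j hj
    refine ⟨τ⁻¹ j, ?_, by simp⟩
    simp only [Finset.mem_filter, Finset.mem_univ, true_and, Equiv.Perm.mul_apply] at *
    exact Finset.mem_filter.mpr ⟨Finset.mem_univ _, by simpa using hj⟩

lemma pdist_div_one (ρ σ : Equiv.Perm α) : pdist (ρ * σ⁻¹) 1 = pdist ρ σ := by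
  have := pdist_mul_right (ρ * σ⁻¹) 1 σ
  simpa using this.symm

lemma pdist_inv_one (ρ : Equiv.Perm α) : pdist ρ⁻¹ 1 = pdist ρ 1 := by
  have := pdist_mul_left ρ ρ⁻¹ 1
  simpa using this.symm.trans (pdist_comm _ _)

lemma pdist_conj_one (τ ρ : Equiv.Perm α) : pdist (τ * ρ * τ⁻¹) 1 = pdist ρ 1 := by
  have h1 := pdist_mul_right (τ * ρ * τ⁻¹) 1 τ
  have h2 := pdist_mul_left τ ρ 1
  simp only [mul_assoc, inv_mul_cancel, mul_one, one_mul] at h1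
  rw [← mul_assoc] at h1
  rw [← h1, h2.symm]
  simp

lemma pdist_inv_mul_one (ρ σ : Equiv.Perm α) : pdist (ρ⁻¹ * σ) 1 = pdist ρ σ := by
  have h := pdist_mul_left ρ (ρ⁻¹ * σ) 1
  rw [mul_inv_cancel_left, mul_one] at h
  rw [← h, pdist_comm]

lemma pdist_mul_one_le (ρ σ : Equiv.Perm α) :
    pdist (ρ * σ) 1 ≤ pdist ρ 1 + pdist σ 1 := by
  have := pdist_triangle (ρ * σ) σ 1
  have h2 : pdist (ρ * σ) σ = pdist ρ 1 := by
    have := pdist_mul_right ρ 1 σ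
    simpa using this
  linarith

lemma pdist_permCongr (e : α ≃ β) (ρ σ : Equiv.Perm α) :
    pdist (e.permCongr ρ) (e.permCongr σ) = pdist ρ σ := by
  unfold pdist
  rw [Fintype.card_congr e]
  congr 1
  have hcards : (Finset.univ.filter fun i => (e.permCongr ρ) i ≠ (e.permCongr σ) i).card
      = (Finset.univ.filter fun i => ρ i ≠ σ i).card := by
    apply Finset.card_bij (fun i _ => e.symm i)
    · intro i hi
      simp only [Finset.mem_filter, Finset.mem_univ, true_and, Equiv.permCongr_apply] at *
      intro hc
      exact (Finset.mem_filter.mp hi).2 (by rw [hc])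
    · intro i _ j _ hij
      exact e.symm.injective hij
    · intro j hj
      refine ⟨e j, ?_, by simp⟩
      simp only [Finset.mem_filter, Finset.mem_univ, true_and, Equiv.permCongr_apply] at *
      simpa using hj
  exact_mod_cast hcards

/-- `permCongr` as a multiplicative map. -/
lemma permCongr_mul (e : α ≃ β) (ρ σ : Equiv.Perm α) :
    e.permCongr (ρ * σ) = e.permCongr ρ * e.permCongr σ := by
  ext x
  simp [Equiv.Perm.mul_apply]

lemma permCongr_one (e : α ≃ β) : e.permCongr (1 : Equiv.Perm α) = 1 := by
  ext x; simp

/-- The diagonal (tensor-power) amplification of a permutation. -/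
def ampPerm (m : ℕ) (σ : Equiv.Perm α) : Equiv.Perm (Fin m → α) :=
  Equiv.arrowCongr (Equiv.refl (Fin m)) σ

@[simp] lemma ampPerm_apply (m : ℕ) (σ : Equiv.Perm α) (f : Fin m → α) (j : Fin m) :
    ampPerm m σ f j = σ (f j) := rfl

lemma ampPerm_mul (m : ℕ) (σ τ : Equiv.Perm α) :
    ampPerm m (σ * τ) = ampPerm m σ * ampPerm m τ := by
  ext f j
  simp [Equiv.Perm.mul_apply]

lemma ampPerm_one (m : ℕ) : ampPerm m (1 : Equiv.Perm α) = 1 := by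
  ext f j; simp [ampPerm]

lemma card_amp_eq (m : ℕ) (σ τ : Equiv.Perm α) :
    (Finset.univ.filter fun f : Fin m → α => ¬ ampPerm m σ f ≠ ampPerm m τ f).card
      = (Finset.univ.filter fun x => ¬ σ x ≠ τ x).card ^ m := by
  have : (Finset.univ.filter fun f : Fin m → α => ¬ ampPerm m σ f ≠ ampPerm m τ f)
      = Fintype.piFinset (fun _ : Fin m => Finset.univ.filter fun x => ¬ σ x ≠ τ x) := by
    ext f
    simp only [Finset.mem_filter, Finset.mem_univ, true_and, Fintype.mem_piFinset,
      not_not]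
    constructor
    · intro h j
      have := congrFun h j
      simpa using this
    · intro h
      ext j
      simpa using h j
  rw [this, Fintype.card_piFinset]
  simp

lemma pdist_amp (m : ℕ) (σ τ : Equiv.Perm α) (h : 0 < Fintype.card α) :
    pdist (ampPerm m σ) (ampPerm m τ) = 1 - (1 - pdist σ τ) ^ m := by
  classical
  set n := Fintype.card α with hn
  set F := (Finset.univ.filter fun x => ¬ σ x ≠ τ x).card with hF
  set D := (Finset.univ.filter fun x => σ x ≠ τ x).card with hD
  have hDF : D + F = n := by
    rw [hD, hF, hn]
    rw [Finset.card_filter_add_card_filter_not]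
    exact Finset.card_univ
  set D' := (Finset.univ.filter fun f : Fin m → α => ampPerm m σ f ≠ ampPerm m τ f).card with hD'
  have hDF' : D' + F ^ m = n ^ m := by
    rw [hD', ← card_amp_eq m σ τ]
    rw [Finset.card_filter_add_card_filter_not]
    rw [Finset.card_univ, hn]
    simp [Fintype.card_fun]
  have hcard : Fintype.card (Fin m → α) = n ^ m := by simp [Fintype.card_fun, hn]
  have hn0 : (n : ℝ) ≠ 0 := by positivity
  have hnm0 : ((n : ℝ)) ^ m ≠ 0 := by positivity
  have h1 : pdist σ τ = (D : ℝ) / n := rfl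
  have h2 : pdist (ampPerm m σ) (ampPerm m τ) = (D' : ℝ) / (n : ℝ) ^ m := by
    unfold pdist
    rw [hcard]
    push_cast
    rfl
  have hDr : (D : ℝ) = n - F := by
    have := congrArg (fun x : ℕ => (x : ℝ)) hDF
    push_cast at this
    linarith
  have hDr' : (D' : ℝ) = (n : ℝ) ^ m - (F : ℝ) ^ m := by
    have := congrArg (fun x : ℕ => (x : ℝ)) hDF'
    push_cast at this
    linarith
  rw [h2, h1, hDr, hDr']
  have : 1 - ((n : ℝ) - F) / n = (F : ℝ) / n := by field_simp; ring
  rw [this]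
  rw [div_pow]
  field_simp

lemma pdist_amp_le (m : ℕ) (σ τ : Equiv.Perm α) :
    pdist (ampPerm m σ) (ampPerm m τ) ≤ m * pdist σ τ := by
  rcases Nat.eq_zero_or_pos (Fintype.card α) with h | h
  · have : IsEmpty α := Fintype.card_eq_zero_iff.mp h
    have : σ = τ := Subsingleton.elim _ _
    rw [this, pdist_self, pdist_self]
    positivity
  · rw [pdist_amp m σ τ h]
    have h0 : 0 ≤ pdist σ τ := pdist_nonneg σ τ
    have h1 : pdist σ τ ≤ 1 := pdist_le_one σ τ
    have hber := one_add_mul_le_pow (a := -(pdist σ τ)) (by linarith) m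
    have : (1 + -(pdist σ τ)) = 1 - pdist σ τ := by ring
    rw [this] at hber
    nlinarith [hber]

lemma pdist_amp_one (m : ℕ) (σ : Equiv.Perm α) (h : 0 < Fintype.card α) :
    pdist (ampPerm m σ) 1 = 1 - (1 - pdist σ 1) ^ m := by
  rw [← ampPerm_one (α := α) m, pdist_amp m σ 1 h]

section FixPow

variable {γ : Type*} [DecidableEq γ]

/-- Modify `σ` to become the identity on the support of `σ ^ k`; the result has
order dividing `k`. -/
def fixPow (k : ℕ) (σ : Equiv.Perm γ) : Equiv.Perm γ where
  toFun i := if (σ ^ k) i = i then σ i else i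
  invFun i := if (σ ^ k) i = i then σ⁻¹ i else i
  left_inv := by
    intro i
    have hcomm : ∀ j, (σ ^ k) (σ j) = σ ((σ ^ k) j) := by
      intro j
      rw [← Equiv.Perm.mul_apply, ← Equiv.Perm.mul_apply, ← pow_succ, ← pow_succ']
    by_cases h : (σ ^ k) i = i
    · simp only [if_pos h]
      rw [if_pos (by rw [hcomm, h])]
      simp
    · simp only [if_neg h, if_neg h]
  right_inv := by
    intro i
    have hcomm : ∀ j, (σ ^ k) (σ⁻¹ j) = σ⁻¹ ((σ ^ k) j) := by
      intro j
      rw [← Equiv.Perm.mul_apply, ← Equiv.Perm.mul_apply]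
      congr 1
      group
    by_cases h : (σ ^ k) i = i
    · simp only [if_pos h]
      rw [if_pos (by rw [hcomm, h])]
      simp
    · simp only [if_neg h, if_neg h]

lemma fixPow_apply (k : ℕ) (σ : Equiv.Perm γ) (i : γ) :
    fixPow k σ i = if (σ ^ k) i = i then σ i else i := rfl

lemma fixPow_pow (k : ℕ) (σ : Equiv.Perm γ) : (fixPow k σ) ^ k = 1 := by
  have hcomm : ∀ (m : ℕ) (j : γ), (σ ^ k) ((σ ^ m) j) = (σ ^ m) ((σ ^ k) j) := by
    intro m j
    rw [← Equiv.Perm.mul_apply, ← Equiv.Perm.mul_apply, pow_mul_comm]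
  have key : ∀ (m : ℕ) (i : γ), ((fixPow k σ) ^ m) i =
      if (σ ^ k) i = i then (σ ^ m) i else i := by
    intro m
    induction m with
    | zero => intro i; by_cases h : (σ ^ k) i = i <;> simp [h]
    | succ m ih =>
      intro i
      have hstep : ((fixPow k σ) ^ (m + 1)) i = fixPow k σ (((fixPow k σ) ^ m) i) := by
        rw [pow_succ', Equiv.Perm.mul_apply]
      rw [hstep, ih i]
      by_cases h : (σ ^ k) i = i
      · rw [if_pos h, if_pos h, fixPow_apply]
        rw [if_pos (by rw [hcomm m i, h])]
        rw [← Equiv.Perm.mul_apply, ← pow_succ']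
      · rw [if_neg h, if_neg h, fixPow_apply, if_neg h]
  ext i
  have hk := key k i
  by_cases h : (σ ^ k) i = i
  · rw [if_pos h] at hk
    simp [hk, h]
  · rw [if_neg h] at hk
    simp [hk]

lemma fixPow_ne (k : ℕ) (σ : Equiv.Perm γ) (i : γ) (h : fixPow k σ i ≠ σ i) :
    (σ ^ k) i ≠ i := by
  intro hc
  exact h (by rw [fixPow_apply, if_pos hc])

end FixPow

lemma pdist_fixPow_le (k : ℕ) (σ : Equiv.Perm α) :
    pdist (fixPow k σ) σ ≤ pdist (σ ^ k) 1 := by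
  apply pdist_mono
  intro i hi
  simpa using fixPow_ne k σ i hi

end HigAux


namespace HigAux

open Finset Equiv

lemma pdist_card_zero {α : Type*} [Fintype α] [DecidableEq α] (h : Fintype.card α = 0)
    (ρ σ : Equiv.Perm α) : pdist ρ σ = 0 := by
  unfold pdist
  rw [h]
  simp

section Ultra

variable {I : Type*} (U : Ultrafilter I) (nn : I → ℕ)

/-- Elements of the product of symmetric groups that are infinitesimally close to `1`
along the ultrafilter `U`. -/
def metricN : Subgroup (∀ i, Equiv.Perm (Fin (nn i))) where
  carrier := {σ | ∀ ε : ℝ, 0 < ε → {i | pdist (σ i) 1 < ε} ∈ U}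
  one_mem' := by
    intro ε hε
    apply Filter.mem_of_superset Filter.univ_mem
    intro i _
    simp only [Set.mem_setOf_eq, Pi.one_apply, pdist_self]
    exact hε
  mul_mem' := by
    intro a b ha hb ε hε
    have := Filter.inter_mem (ha (ε / 2) (by linarith)) (hb (ε / 2) (by linarith))
    apply Filter.mem_of_superset this
    rintro i ⟨h1, h2⟩
    simp only [Set.mem_setOf_eq, Pi.mul_apply] at *
    calc pdist (a i * b i) 1 ≤ pdist (a i) 1 + pdist (b i) 1 := pdist_mul_one_le _ _
      _ < ε := by linarith
  inv_mem' := by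
    intro a ha ε hε
    apply Filter.mem_of_superset (ha ε hε)
    intro i h
    simp only [Set.mem_setOf_eq, Pi.inv_apply] at *
    rwa [pdist_inv_one]

lemma mem_metricN (a : ∀ i, Equiv.Perm (Fin (nn i))) :
    a ∈ metricN U nn ↔ ∀ ε : ℝ, 0 < ε → {i | pdist (a i) 1 < ε} ∈ U := Iff.rfl

instance metricN_normal : (metricN U nn).Normal := by
  constructor
  intro a ha g ε hε
  apply Filter.mem_of_superset (ha ε hε)
  intro i h
  simp only [Set.mem_setOf_eq, Pi.mul_apply, Pi.inv_apply] at *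
  rwa [pdist_conj_one]

/-- Any group embedding into a metric ultraproduct of symmetric groups is sofic. -/
lemma sofic_of_embeds_ultra {H : Type*} [Group H]
    (χ : H →* (∀ i, Equiv.Perm (Fin (nn i))) ⧸ metricN U nn)
    (hχ : Function.Injective χ) : IsSofic H := by
  intro T hT δ₀ hδ₀
  classical
  set x : H → ∀ i, Equiv.Perm (Fin (nn i)) := fun q => (χ q).out with hx
  have hmk : ∀ q : H, QuotientGroup.mk' (metricN U nn) (x q) = χ q := by
    intro q
    exact Quotient.out_eq' (χ q)
  -- approximate multiplicativity of the representatives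
  have hmul : ∀ q r : H, ∀ ε : ℝ, 0 < ε →
      {i | pdist (x q i * x r i) (x (q * r) i) < ε} ∈ U := by
    intro q r ε hε
    have hmem : (x q * x r) * (x (q * r))⁻¹ ∈ metricN U nn := by
      rw [← QuotientGroup.eq_one_iff ((x q * x r) * (x (q * r))⁻¹)]
      have : ((((x q * x r) * (x (q * r))⁻¹ : _) : _ ⧸ metricN U nn))
          = QuotientGroup.mk' (metricN U nn) ((x q * x r) * (x (q * r))⁻¹) := rfl
      rw [this, map_mul, map_mul, map_inv, hmk, hmk, hmk, map_mul]
      group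
    have := hmem ε hε
    apply Filter.mem_of_superset this
    intro i hi
    simp only [Set.mem_setOf_eq, Pi.mul_apply, Pi.inv_apply] at *
    rwa [pdist_div_one] at hi
  -- separation of nontrivial elements
  have hne : ∀ q : H, q ≠ 1 → ∃ e : ℝ, 0 < e ∧ e ≤ 1 ∧ {i | e ≤ pdist (x q i) 1} ∈ U := by
    intro q hq
    have hxq : x q ∉ metricN U nn := by
      intro hmem
      apply hq
      apply hχ
      rw [map_one, ← hmk q]
      exact (QuotientGroup.eq_one_iff (x q)).mpr hmem
    simp only [mem_metricN, Set.mem_setOf_eq, not_forall] at hxq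
    obtain ⟨e, he, hnotU⟩ := hxq
    refine ⟨min e 1, by simp [he], min_le_right _ _, ?_⟩
    have hcompl : {i | pdist (x q i) 1 < e}ᶜ ∈ U := Ultrafilter.compl_mem_iff_notMem.mpr hnotU
    apply Filter.mem_of_superset hcompl
    intro i hi
    simp only [Set.mem_compl_iff, Set.mem_setOf_eq, not_lt] at *
    exact le_trans (min_le_left _ _) hi
  -- a uniform positive separation constant on T
  have : ∀ q : H, ∃ e : ℝ, 0 < e ∧ e ≤ 1 ∧ (q ≠ 1 → {i | e ≤ pdist (x q i) 1} ∈ U) := by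
    intro q
    by_cases hq : q = 1
    · exact ⟨1, one_pos, le_refl 1, fun h => absurd hq h⟩
    · obtain ⟨e, h1, h2, h3⟩ := hne q hq
      exact ⟨e, h1, h2, fun _ => h3⟩
  choose eps heps0 heps1 hepsU using this
  set Tf := hT.toFinset with hTf
  obtain ⟨c, hc0, hc1, hcle⟩ : ∃ c : ℝ, 0 < c ∧ c ≤ 1 ∧ ∀ q ∈ Tf, c ≤ eps q := by
    rcases Tf.eq_empty_or_nonempty with h | h
    · exact ⟨1, one_pos, le_refl 1, fun q hq => by simp [h] at hq⟩
    · obtain ⟨b, hb, hbmin⟩ := Finset.exists_min_image Tf eps h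
      exact ⟨eps b, heps0 b, heps1 b, fun q hq => hbmin q hq⟩
  obtain ⟨m, hm⟩ := exists_pow_lt_of_lt_one hδ₀ (by linarith : 1 - c < 1)
  set δ₁ := δ₀ / (m + 1) with hδ₁
  have hδ₁pos : 0 < δ₁ := by positivity
  -- choose a good index
  set Gd : Set I := (⋂ q ∈ (Tf : Set H), ⋂ r ∈ (Tf : Set H),
      {i | pdist (x q i * x r i) (x (q * r) i) < δ₁}) ∩
      (⋂ q ∈ (Tf : Set H), {i | q ≠ 1 → eps q ≤ pdist (x q i) 1}) with hGd
  have hGdU : Gd ∈ U := by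
    apply Filter.inter_mem
    · rw [Filter.biInter_mem Tf.finite_toSet]
      intro q _
      rw [Filter.biInter_mem Tf.finite_toSet]
      intro r _
      exact hmul q r δ₁ hδ₁pos
    · rw [Filter.biInter_mem Tf.finite_toSet]
      intro q _
      by_cases hq : q = 1
      · apply Filter.mem_of_superset Filter.univ_mem
        intro i _ h
        exact absurd hq h
      · apply Filter.mem_of_superset (hepsU q hq)
        intro i hi _
        exact hi
  obtain ⟨i₀, hi₀⟩ := Filter.nonempty_of_mem hGdU
  rw [hGd, Set.mem_inter_iff] at hi₀
  obtain ⟨hi₀mul, hi₀sep⟩ := hi₀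
  simp only [Set.mem_iInter, Set.mem_setOf_eq, Finset.mem_coe] at hi₀mul hi₀sep
  -- the amplified approximation
  set n := nn i₀ with hn
  refine ⟨n ^ m, fun q => (finFunctionFinEquiv).permCongr (ampPerm m (x q i₀)), ?_, ?_⟩
  · -- multiplicativity
    intro g hg h hh hgh
    rw [← hT.mem_toFinset] at hg hh hgh
    rw [permDist_eq, ← permCongr_mul, ← ampPerm_mul, pdist_permCongr]
    calc pdist (ampPerm m (x g i₀ * x h i₀)) (ampPerm m (x (g * h) i₀))
        ≤ m * pdist (x g i₀ * x h i₀) (x (g * h) i₀) := pdist_amp_le m _ _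
      _ ≤ m * δ₁ := by
          apply mul_le_mul_of_nonneg_left (le_of_lt (hi₀mul g hg h hh)) (Nat.cast_nonneg m)
      _ < δ₀ := by
          rw [hδ₁]
          rw [div_eq_mul_inv, ← mul_assoc]
          have hmlt : (m : ℝ) < m + 1 := by linarith
          calc (m : ℝ) * δ₀ * ((m : ℝ) + 1)⁻¹ < ((m : ℝ) + 1) * δ₀ * ((m : ℝ) + 1)⁻¹ := by
                apply mul_lt_mul_of_pos_right ?_ (by positivity)
                exact mul_lt_mul_of_pos_right hmlt hδ₀
            _ = δ₀ := by field_simp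
  · -- freeness
    intro g hg hg1
    rw [← hT.mem_toFinset] at hg
    have hsep := hi₀sep g hg hg1
    have hnpos : 0 < n := by
      rcases Nat.eq_zero_or_pos n with h0 | h
      · exfalso
        have hz : pdist (x g i₀) 1 = 0 :=
          pdist_card_zero (by rw [Fintype.card_fin]; exact h0) _ _
        rw [hz] at hsep
        exact absurd (lt_of_lt_of_le (heps0 g) hsep) (lt_irrefl 0)
      · exact h
    rw [permDist_eq]
    have h1 : (1 : Equiv.Perm (Fin (n ^ m))) = (finFunctionFinEquiv).permCongr 1 := by
      rw [permCongr_one]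
    rw [h1, pdist_permCongr]
    rw [pdist_amp_one m _ (by simpa using hnpos)]
    have hb : pdist (x g i₀) 1 ≤ 1 := pdist_le_one _ _
    have hc' : c ≤ eps g := hcle g hg
    have key : (1 - pdist (x g i₀) 1) ^ m ≤ (1 - c) ^ m := by
      apply pow_le_pow_left₀ (by linarith [hsep, heps1 g, heps0 g]) (by linarith [hsep, hc'])
    have : (1 - pdist (x g i₀) 1) ^ m < δ₀ := lt_of_le_of_lt key hm
    linarith

end Ultra

end HigAux


namespace HigAux

open Finset Equiv

/-- Forward direction: pulling back a sofic approximation of the quotient. -/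
lemma forward_aux {G : Type*} [Group G] {Q : Type*} [Group Q]
    (π : G →* Q) (τ : Q) (k : ℕ) (hk : 1 ≤ k)
    (hinj : Function.Injective π) (hτ : τ ^ k = 1)
    {B A : Subgroup G} (φ : B ≃* A)
    (hrel : ∀ b : B, π (b : G) * τ = τ * π ((φ b : G)))
    (hsofic : IsSofic Q)
    (S : Set G) (hS : S.Finite) (δ ε : ℝ) (hδ : 0 < δ) (hε : 0 < ε) :
    ∃ (n : ℕ) (ψ : G → Equiv.Perm (Fin n)) (f : Equiv.Perm (Fin n)),
      IsApprox S δ ψ ∧ f ^ k = 1 ∧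
      ∀ b : B, (b : G) ∈ S → (φ b : G) ∈ S →
        permDist (ψ (b : G) * f) (f * ψ ((φ b : G))) < ε := by
  classical
  have hkR : (1 : ℝ) ≤ 2 * (k : ℝ) + 6 := by
    have : (0 : ℝ) ≤ (k : ℝ) := Nat.cast_nonneg k
    linarith
  set δ' : ℝ := min δ ε / (2 * (k : ℝ) + 6) with hδ'def
  have hδ'pos : 0 < δ' := by
    apply div_pos (lt_min hδ hε)
    linarith
  have hδ'min : δ' ≤ min δ ε := div_le_self (le_of_lt (lt_min hδ hε)) hkR
  have hδ'δ : δ' ≤ δ := le_trans hδ'min (min_le_left _ _)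
  have hsumδ : (2 * (k : ℝ) + 6) * δ' = min δ ε := by
    rw [hδ'def]
    field_simp
  set S' : Set Q := π '' S ∪ (fun j : ℕ => τ ^ j) '' (Set.Iic k) ∪ (fun g => π g * τ) '' S
    with hS'def
  have hS'fin : S'.Finite :=
    (Set.Finite.union (hS.image π) ((Set.finite_Iic k).image _)).union (hS.image _)
  obtain ⟨n, Ψ, hΨ⟩ := hsofic S' hS'fin δ' hδ'pos
  have hmulΨ : ∀ x ∈ S', ∀ y ∈ S', x * y ∈ S' →
      pdist (Ψ x * Ψ y) (Ψ (x * y)) < δ' := by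
    intro x hx y hy hxy
    rw [← permDist_eq]
    exact hΨ.1 x hx y hy hxy
  have hπS : ∀ g ∈ S, π g ∈ S' := by
    intro g hg
    rw [hS'def]
    left; left
    exact ⟨g, hg, rfl⟩
  have hτj : ∀ j : ℕ, j ≤ k → τ ^ j ∈ S' := by
    intro j hj
    rw [hS'def]
    left; right
    exact ⟨j, Set.mem_Iic.mpr hj, rfl⟩
  have hτS' : τ ∈ S' := by
    have := hτj 1 hk
    rwa [pow_one] at this
  have h1S' : (1 : Q) ∈ S' := by
    have := hτj 0 (Nat.zero_le k)
    rwa [pow_zero] at this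
  have hπτ : ∀ g ∈ S, π g * τ ∈ S' := by
    intro g hg
    rw [hS'def]
    right
    exact ⟨g, hg, rfl⟩
  have hone : pdist (Ψ 1) 1 < δ' := by
    have h := hmulΨ 1 h1S' 1 h1S' (by rw [one_mul]; exact h1S')
    rw [one_mul] at h
    have h2 := pdist_mul_right (Ψ 1) 1 (Ψ 1)
    rw [one_mul] at h2
    rw [← h2]
    exact h
  set F := Ψ τ with hF
  have hpow : ∀ j : ℕ, j ≤ k → pdist (F ^ j) (Ψ (τ ^ j)) < ((j : ℝ) + 1) * δ' := by
    intro j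
    induction j with
    | zero =>
      intro _
      rw [pow_zero, pow_zero, pdist_comm]
      simpa using hone
    | succ j ih =>
      intro hj1
      have hj : j ≤ k := le_trans (Nat.le_succ j) hj1
      have hstep := hmulΨ (τ ^ j) (hτj j hj) τ hτS'
        (by rw [← pow_succ]; exact hτj (j + 1) hj1)
      have h1 : pdist (F ^ (j + 1)) (Ψ (τ ^ j) * F) = pdist (F ^ j) (Ψ (τ ^ j)) := by
        rw [pow_succ]
        exact pdist_mul_right _ _ _
      have h2 : pdist (Ψ (τ ^ j) * F) (Ψ (τ ^ (j + 1))) < δ' := by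
        rw [pow_succ]
        exact hstep
      calc pdist (F ^ (j + 1)) (Ψ (τ ^ (j + 1)))
          ≤ pdist (F ^ (j + 1)) (Ψ (τ ^ j) * F) + pdist (Ψ (τ ^ j) * F) (Ψ (τ ^ (j + 1))) :=
            pdist_triangle _ _ _
        _ < ((j : ℝ) + 1) * δ' + δ' := add_lt_add_of_le_of_lt (le_of_lt (h1 ▸ ih hj)) h2
        _ = ((j : ℝ) + 1 + 1) * δ' := by ring
        _ = (((j + 1 : ℕ) : ℝ) + 1) * δ' := by push_cast; ring
  have hFk : pdist (F ^ k) 1 < ((k : ℝ) + 2) * δ' := by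
    have h1 := hpow k (le_refl k)
    have h2 : pdist (Ψ (τ ^ k)) 1 < δ' := by rw [hτ]; exact hone
    calc pdist (F ^ k) 1 ≤ pdist (F ^ k) (Ψ (τ ^ k)) + pdist (Ψ (τ ^ k)) 1 :=
          pdist_triangle _ _ _
      _ < ((k : ℝ) + 1) * δ' + δ' := add_lt_add h1 h2
      _ = ((k : ℝ) + 2) * δ' := by ring
  have hfF : pdist (fixPow k F) F < ((k : ℝ) + 2) * δ' :=
    lt_of_le_of_lt (pdist_fixPow_le k F) hFk
  refine ⟨n, fun g => Ψ (π g), fixPow k F, ⟨?_, ?_⟩, fixPow_pow k F, ?_⟩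
  · intro g hg h hh hgh
    show permDist (Ψ (π g) * Ψ (π h)) (Ψ (π (g * h))) < δ
    rw [permDist_eq, map_mul]
    exact lt_of_lt_of_le (hmulΨ (π g) (hπS g hg) (π h) (hπS h hh)
      (by rw [← map_mul]; exact hπS _ hgh)) hδ'δ
  · intro g hg hg1
    have hπg1 : π g ≠ 1 := by
      intro hc
      exact hg1 (hinj (by rw [hc, map_one]))
    have := hΨ.2 (π g) (hπS g hg) hπg1
    show (1 : ℝ) - δ < permDist (Ψ (π g)) 1
    linarith
  · intro b hb hφb
    show permDist (Ψ (π (b : G)) * fixPow k F) (fixPow k F * Ψ (π ((φ b : G)))) < ε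
    rw [permDist_eq]
    have t1 : pdist (Ψ (π b) * fixPow k F) (Ψ (π b) * F) < ((k : ℝ) + 2) * δ' := by
      rw [pdist_mul_left]
      exact hfF
    have t2 : pdist (Ψ (π b) * F) (Ψ (π b * τ)) < δ' :=
      hmulΨ (π b) (hπS _ hb) τ hτS' (hπτ _ hb)
    have t3 : pdist (Ψ (π b * τ)) (F * Ψ (π (φ b))) < δ' := by
      rw [hrel b, pdist_comm]
      exact hmulΨ τ hτS' (π (φ b)) (hπS _ hφb) (by rw [← hrel b]; exact hπτ _ hb)
    have t4 : pdist (F * Ψ (π (φ b))) (fixPow k F * Ψ (π (φ b))) < ((k : ℝ) + 2) * δ' := by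
      rw [pdist_mul_right, pdist_comm]
      exact hfF
    calc pdist (Ψ (π b) * fixPow k F) (fixPow k F * Ψ (π (φ b)))
        ≤ pdist (Ψ (π b) * fixPow k F) (Ψ (π b) * F)
          + pdist (Ψ (π b) * F) (Ψ (π b * τ))
          + pdist (Ψ (π b * τ)) (F * Ψ (π (φ b)))
          + pdist (F * Ψ (π (φ b))) (fixPow k F * Ψ (π (φ b))) := by
            have a1 := pdist_triangle (Ψ (π b) * fixPow k F) (Ψ (π b) * F)
              (fixPow k F * Ψ (π (φ b)))
            have a2 := pdist_triangle (Ψ (π b) * F) (Ψ (π b * τ))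
              (fixPow k F * Ψ (π (φ b)))
            have a3 := pdist_triangle (Ψ (π b * τ)) (F * Ψ (π (φ b)))
              (fixPow k F * Ψ (π (φ b)))
            linarith
      _ < ((k : ℝ) + 2) * δ' + δ' + δ' + ((k : ℝ) + 2) * δ' := by linarith
      _ = (2 * (k : ℝ) + 6) * δ' := by ring
      _ = min δ ε := hsumδ
      _ ≤ ε := min_le_right _ _

/-- Index type for the net of approximation parameters. -/
def Idx (G : Type u) : Type u :=
  {x : Set G × ℝ × ℝ // x.1.Finite ∧ 0 < x.2.1 ∧ 0 < x.2.2}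

/-- Tail sets of the parameter net. -/
def tailSet {G : Type u} (S₀ : Set G) (δ₀ ε₀ : ℝ) : Set (Idx G) :=
  {i | S₀ ⊆ i.1.1 ∧ i.1.2.1 ≤ δ₀ ∧ i.1.2.2 ≤ ε₀}

lemma exists_ultra (G : Type u) :
    ∃ U : Ultrafilter (Idx G), ∀ (S : Set G), S.Finite → ∀ δ ε : ℝ, 0 < δ → 0 < ε →
      tailSet S δ ε ∈ U := by
  classical
  have hne : Nonempty (Idx G) := ⟨⟨(∅, 1, 1), Set.finite_empty, one_pos, one_pos⟩⟩
  set FF : Filter (Idx G) := ⨅ p : Idx G, Filter.principal (tailSet p.1.1 p.1.2.1 p.1.2.2)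
    with hFF
  have hself : ∀ p : Idx G, p ∈ tailSet p.1.1 p.1.2.1 p.1.2.2 := by
    intro p
    exact ⟨subset_rfl, le_refl _, le_refl _⟩
  have hdir : Directed (· ≥ ·)
      (fun p : Idx G => Filter.principal (tailSet (G := G) p.1.1 p.1.2.1 p.1.2.2)) := by
    intro p q
    refine ⟨⟨(p.1.1 ∪ q.1.1, min p.1.2.1 q.1.2.1, min p.1.2.2 q.1.2.2),
      p.2.1.union q.2.1, lt_min p.2.2.1 q.2.2.1, lt_min p.2.2.2 q.2.2.2⟩, ?_, ?_⟩
    · show Filter.principal _ ≤ Filter.principal _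
      rw [Filter.principal_mono]
      rintro i ⟨h1, h2, h3⟩
      exact ⟨subset_trans Set.subset_union_left h1,
        le_trans h2 (min_le_left _ _), le_trans h3 (min_le_left _ _)⟩
    · show Filter.principal _ ≤ Filter.principal _
      rw [Filter.principal_mono]
      rintro i ⟨h1, h2, h3⟩
      exact ⟨subset_trans Set.subset_union_right h1,
        le_trans h2 (min_le_right _ _), le_trans h3 (min_le_right _ _)⟩
  have hnb : FF.NeBot := by
    rw [hFF]
    apply Filter.iInf_neBot_of_directed' hdir
    intro p
    rw [Filter.principal_neBot_iff]
    exact ⟨p, hself p⟩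
  refine ⟨Ultrafilter.of FF, ?_⟩
  intro S hS δ ε hδ hε
  have hmem : tailSet S δ ε ∈ FF := by
    rw [hFF]
    exact Filter.mem_iInf_of_mem ⟨(S, δ, ε), hS, hδ, hε⟩ (Filter.mem_principal_self _)
  exact Ultrafilter.of_le FF hmem

end HigAux

/-- **Theorem.** `Hig_k(G,φ)` has a sofic quotient `Q` with `G → Hig_k(G,φ) → Q` injective if
and only if there are sofic approximations of `G` admitting permutations of order dividing `k`
which almost conjugate the action of `B` to the action of `A`. -/
theorem hig_sofic_quotient_iff_almost_conjugating (hk : 1 ≤ k) :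
    (∃ (Q : Type u) (_ : Group Q) (p : Hig G A B φ k →* Q),
        Function.Surjective p ∧ IsSofic Q ∧
        Function.Injective (p.comp (higIota G A B φ k))) ↔
    (∀ S : Set G, S.Finite → ∀ δ ε : ℝ, 0 < δ → 0 < ε →
        ∃ (n : ℕ) (ψ : G → Equiv.Perm (Fin n)) (f : Equiv.Perm (Fin n)),
          IsApprox S δ ψ ∧ f ^ k = 1 ∧
          ∀ b : B, (b : G) ∈ S → (φ b : G) ∈ S →
            permDist (ψ (b : G) * f) (f * ψ ((φ b : G))) < ε) := by
  constructor
  · -- forward direction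
    rintro ⟨Q, _, p, _hsurj, hsofic, hinj⟩ S hS δ ε hδ hε
    set N := Subgroup.normalClosure (higRels G A B φ k) with hN
    have hτk : (p (QuotientGroup.mk' N (higT G))) ^ k = 1 := by
      erw [← map_pow]
      have hpow : QuotientGroup.mk' N (higT G) ^ k = QuotientGroup.mk' N (higT G ^ k) :=
        (map_pow _ _ _).symm
      erw [hpow]
      have hmem : higT G ^ k ∈ N := Subgroup.subset_normalClosure (Or.inl rfl)
      erw [show QuotientGroup.mk' N (higT G ^ k) = 1 from
        (QuotientGroup.eq_one_iff _).mpr hmem, map_one]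
    have hrel : ∀ b : B, (p.comp (higIota G A B φ k)) (b : G) * p (QuotientGroup.mk' N (higT G))
        = p (QuotientGroup.mk' N (higT G)) * (p.comp (higIota G A B φ k)) ((φ b : G)) := by
      intro b
      have hmem : (higT G)⁻¹ * Monoid.Coprod.inl (b : G) * higT G *
          (Monoid.Coprod.inl ((φ b : G)) : Monoid.Coprod G (FreeGroup Unit))⁻¹ ∈ N :=
        Subgroup.subset_normalClosure (Or.inr (Set.mem_iUnion.mpr ⟨b, rfl⟩))
      have hmem2 : (Monoid.Coprod.inl (b : G) * higT G)⁻¹ *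
          (higT G * (Monoid.Coprod.inl ((φ b : G)) : Monoid.Coprod G (FreeGroup Unit))) ∈ N := by
        have hinv := N.inv_mem hmem
        have hnrm : N.Normal := Subgroup.normalClosure_normal
        have hconj := hnrm.conj_mem _ hinv
          ((Monoid.Coprod.inl ((φ b : G)) : Monoid.Coprod G (FreeGroup Unit))⁻¹)
        convert hconj using 1
        group
      have hq : QuotientGroup.mk' N (Monoid.Coprod.inl (b : G) * higT G)
          = QuotientGroup.mk' N (higT G *
            (Monoid.Coprod.inl ((φ b : G)) : Monoid.Coprod G (FreeGroup Unit))) := by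
        apply (QuotientGroup.eq ).mpr ?_
        exact hmem2
      calc (p.comp (higIota G A B φ k)) (b : G) * p (QuotientGroup.mk' N (higT G))
          = p (QuotientGroup.mk' N (Monoid.Coprod.inl (b : G) * higT G)) := by
            erw [map_mul, map_mul]
            rfl
        _ = p (QuotientGroup.mk' N (higT G *
              (Monoid.Coprod.inl ((φ b : G)) : Monoid.Coprod G (FreeGroup Unit)))) := by
            rw [hq]
        _ = p (QuotientGroup.mk' N (higT G)) * (p.comp (higIota G A B φ k)) ((φ b : G)) := by
            erw [map_mul, map_mul]
            rfl
    exact HigAux.forward_aux (p.comp (higIota G A B φ k)) (p (QuotientGroup.mk' N (higT G)))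
      k hk hinj hτk φ hrel hsofic S hS δ ε hδ hε
  · -- backward direction
    intro hyp
    classical
    obtain ⟨U, hU⟩ := HigAux.exists_ultra G
    choose nn ψd fd hApp hford hconj using
      fun i : HigAux.Idx G => hyp i.1.1 i.2.1 i.1.2.1 i.1.2.2 i.2.2.1 i.2.2.2
    set M := (∀ i, Equiv.Perm (Fin (nn i))) ⧸ HigAux.metricN U nn with hM
    set mkP : (∀ i, Equiv.Perm (Fin (nn i))) →* M :=
      QuotientGroup.mk' (HigAux.metricN U nn) with hmkP
    have hclose : ∀ a b : ∀ i, Equiv.Perm (Fin (nn i)),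
        (∀ ε : ℝ, 0 < ε → {i | HigAux.pdist (a i) (b i) < ε} ∈ U) → mkP a = mkP b := by
      intro a b h
      have hmem : a⁻¹ * b ∈ HigAux.metricN U nn := by
        rw [HigAux.mem_metricN]
        intro ε hε
        apply Filter.mem_of_superset (h ε hε)
        intro i hi
        show HigAux.pdist ((a⁻¹ * b) i) 1 < ε
        rw [show (a⁻¹ * b) i = (a i)⁻¹ * b i from rfl, HigAux.pdist_inv_mul_one]
        exact hi
      have h1 : mkP (a⁻¹ * b) = 1 := (QuotientGroup.eq_one_iff _).mpr hmem
      rw [map_mul, map_inv] at h1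
      exact (inv_mul_eq_one.mp h1)
    have happrox : ∀ (g h : G) (ε : ℝ), 0 < ε →
        {i : HigAux.Idx G | HigAux.pdist (ψd i g * ψd i h) (ψd i (g * h)) < ε} ∈ U := by
      intro g h ε hε
      have hfin : ({g, h, g * h} : Set G).Finite := Set.toFinite _
      apply Filter.mem_of_superset (hU {g, h, g * h} hfin ε 1 hε one_pos)
      rintro i ⟨h1, h2, _⟩
      have hg : g ∈ i.1.1 := h1 (by simp)
      have hh : h ∈ i.1.1 := h1 (by simp)
      have hgh : g * h ∈ i.1.1 := h1 (by simp)
      have := (hApp i).1 g hg h hh hgh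
      rw [HigAux.permDist_eq] at this
      exact lt_of_lt_of_le this h2
    set ΨM : G →* M := MonoidHom.mk' (fun g => mkP (fun i => ψd i g)) (by
      intro g h
      rw [← map_mul]
      exact (hclose _ _ (fun ε hε => happrox g h ε hε)).symm) with hΨM
    set TM : FreeGroup Unit →* M := FreeGroup.lift (fun _ : Unit => mkP fd) with hTM
    set Φ₀ : Monoid.Coprod G (FreeGroup Unit) →* M := Monoid.Coprod.lift ΨM TM with hΦ₀
    have hΦ₀t : Φ₀ (higT G) = mkP fd := by
      rw [hΦ₀, higT, Monoid.Coprod.lift_apply_inr, hTM, FreeGroup.lift_apply_of]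
    have hΦ₀l : ∀ g : G, Φ₀ (Monoid.Coprod.inl g) = mkP (fun i => ψd i g) := by
      intro g
      rw [hΦ₀, Monoid.Coprod.lift_apply_inl]
      rfl
    have hrels : ∀ x ∈ higRels G A B φ k, Φ₀ x = 1 := by
      rintro x (hx | hx)
      · rw [Set.mem_singleton_iff] at hx
        subst hx
        rw [map_pow, hΦ₀t, ← map_pow]
        have : fd ^ k = 1 := by
          funext i
          show (fd ^ k) i = (1 : Equiv.Perm (Fin (nn i)))
          rw [Pi.pow_apply, hford i]
        rw [this, map_one]
      · rw [Set.mem_iUnion] at hx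
        obtain ⟨b, hb⟩ := hx
        rw [Set.mem_singleton_iff] at hb
        subst hb
        rw [map_mul, map_mul, map_mul, map_inv, map_inv, hΦ₀t, hΦ₀l, hΦ₀l,
          ← map_inv, ← map_inv, ← map_mul, ← map_mul, ← map_mul]
        apply (QuotientGroup.eq_one_iff _).mpr
        rw [HigAux.mem_metricN]
        intro ε hε
        have hfin : ({(b : G), ((φ b : G))} : Set G).Finite := Set.toFinite _
        apply Filter.mem_of_superset (hU {(b : G), ((φ b : G))} hfin 1 ε one_pos hε)
        rintro i ⟨h1, _, h3⟩
        have hbS : (b : G) ∈ i.1.1 := h1 (by simp)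
        have hφbS : ((φ b : G)) ∈ i.1.1 := h1 (by simp)
        have hcj := hconj i b hbS hφbS
        rw [HigAux.permDist_eq] at hcj
        show HigAux.pdist ((fd⁻¹ * (fun j => ψd j (b : G)) * fd *
          (fun j => ψd j ((φ b : G)))⁻¹) i) 1 < ε
        have hpt : (fd⁻¹ * (fun j => ψd j (b : G)) * fd *
            (fun j => ψd j ((φ b : G)))⁻¹) i
            = (fd i)⁻¹ * ψd i (b : G) * fd i * (ψd i ((φ b : G)))⁻¹ := rfl
        rw [hpt, HigAux.pdist_div_one]
        have hml := HigAux.pdist_mul_left (fd i) ((fd i)⁻¹ * ψd i (b : G) * fd i)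
          (ψd i ((φ b : G)))
        have hsimp : fd i * ((fd i)⁻¹ * ψd i (b : G) * fd i) = ψd i (b : G) * fd i := by
          group
        rw [hsimp] at hml
        rw [← hml]
        exact lt_of_lt_of_le hcj h3
    have hker : ∀ x ∈ Subgroup.normalClosure (higRels G A B φ k), Φ₀ x = 1 := by
      have hle : Subgroup.normalClosure (higRels G A B φ k) ≤ Φ₀.ker :=
        Subgroup.normalClosure_le_normal (fun x hx => MonoidHom.mem_ker.mpr (hrels x hx))
      intro x hx
      exact MonoidHom.mem_ker.mp (hle hx)
    set Φ : Hig G A B φ k →* M :=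
      QuotientGroup.lift (Subgroup.normalClosure (higRels G A B φ k)) Φ₀ hker with hΦ
    have hΦι : ∀ g : G, Φ (higIota G A B φ k g) = ΨM g := by
      intro g
      show Φ₀ (Monoid.Coprod.inl g) = ΨM g
      rw [hΦ₀, Monoid.Coprod.lift_apply_inl]
    have hΨMinj : ∀ g : G, ΨM g = 1 → g = 1 := by
      intro g hg1
      by_contra hgne
      have hmem : (fun i => ψd i g) ∈ HigAux.metricN U nn := by
        rw [← QuotientGroup.eq_one_iff (fun i => ψd i g)]
        exact hg1
      rw [HigAux.mem_metricN] at hmem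
      have hsmall := hmem (1 / 2) (by norm_num)
      have htail := hU {g} (Set.finite_singleton g) (1 / 2) 1 (by norm_num) one_pos
      obtain ⟨i, hi1, hi2⟩ := Filter.nonempty_of_mem (Filter.inter_mem hsmall htail)
      obtain ⟨hsub, hδle, -⟩ := hi2
      have hgS : g ∈ i.1.1 := hsub rfl
      have hfar := (hApp i).2 g hgS hgne
      rw [HigAux.permDist_eq] at hfar
      simp only [Set.mem_setOf_eq] at hi1
      linarith [hfar, hδle, hi1]
    refine ⟨Hig G A B φ k ⧸ Φ.ker, inferInstance, QuotientGroup.mk' Φ.ker,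
      QuotientGroup.mk'_surjective _, ?_, ?_⟩
    · exact HigAux.sofic_of_embeds_ultra U nn (QuotientGroup.kerLift Φ)
        (QuotientGroup.kerLift_injective Φ)
    · rw [injective_iff_map_eq_one]
      intro g hg1
      apply hΨMinj g
      rw [← hΦι g]
      have hmemk : higIota G A B φ k g ∈ Φ.ker := (QuotientGroup.eq_one_iff _).mp hg1
      exact MonoidHom.mem_ker.mp hmemk
end

section
/- For a group G the following are equivalent: (1) there exist a set I, an ultrafilter 𝒰 on I, natural numbers (n_i)_{i∈I}, and an injective group homomorphism from G into the metric ultraproduct ∏_𝒰 Sym(n_i); (2) for every finite subset S ⊆ G and every δ > 0 there exist n ∈ ℕ and an (S,δ,n)-approximation of G. -/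
universe u

lemma permDist_eq_support {n : ℕ} (ρ σ : Equiv.Perm (Fin n)) :
    permDist ρ σ = ((σ⁻¹ * ρ).support.card : ℝ) / n := by
  have h : (Finset.univ.filter fun i => ρ i ≠ σ i) = (σ⁻¹ * ρ).support := by
    ext i
    simp [Equiv.Perm.mem_support, Equiv.Perm.mul_apply, Equiv.Perm.inv_eq_iff_eq, Equiv.symm_apply_eq]
  rw [permDist, h]

lemma permDist_one {n : ℕ} (σ : Equiv.Perm (Fin n)) :
    permDist σ 1 = ((σ.support.card : ℝ)) / n := by
  rw [permDist_eq_support]; simp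

lemma permDist_mul_one_le {n : ℕ} (σ τ : Equiv.Perm (Fin n)) :
    permDist (σ * τ) 1 ≤ permDist σ 1 + permDist τ 1 := by
  rw [permDist_one, permDist_one, permDist_one, ← add_div]
  refine div_le_div_of_nonneg_right ?_ (Nat.cast_nonneg n)
  have h1 : (σ * τ).support.card ≤ (σ.support ∪ τ.support).card :=
    Finset.card_le_card (Equiv.Perm.support_mul_le σ τ)
  have h2 : (σ.support ∪ τ.support).card ≤ σ.support.card + τ.support.card :=
    Finset.card_union_le _ _
  exact_mod_cast le_trans h1 h2

lemma permDist_inv_one {n : ℕ} (σ : Equiv.Perm (Fin n)) :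
    permDist σ⁻¹ 1 = permDist σ 1 := by
  rw [permDist_one, permDist_one, Equiv.Perm.support_inv]

lemma permDist_conj_one {n : ℕ} (σ g : Equiv.Perm (Fin n)) :
    permDist (g * σ * g⁻¹) 1 = permDist σ 1 := by
  rw [permDist_one, permDist_one, Equiv.Perm.support_conj, Finset.card_map]

/-- The normal subgroup of infinitesimals: sequences of permutations converging to the
identity in normalized Hamming distance along the ultrafilter. -/
noncomputable def infinitesimals {I : Type u} (U : Ultrafilter I) (n : I → ℕ) :
    Subgroup (∀ i, Equiv.Perm (Fin (n i))) where
  carrier := {x | ∀ δ : ℝ, 0 < δ → {i | permDist (x i) 1 < δ} ∈ U}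
  one_mem' := by
    intro δ hδ
    have : {i | permDist ((1 : ∀ i, Equiv.Perm (Fin (n i))) i) 1 < δ} = Set.univ := by
      ext i
      simp only [Set.mem_setOf_eq, Set.mem_univ, iff_true, Pi.one_apply, permDist_one,
        Equiv.Perm.support_one, Finset.card_empty]
      simpa using hδ
    rw [this]
    exact Filter.univ_mem
  mul_mem' := by
    intro x y hx hy δ hδ
    have hmem := Filter.inter_mem (hx (δ / 2) (by linarith)) (hy (δ / 2) (by linarith))
    refine Filter.mem_of_superset hmem ?_
    rintro i ⟨hxi, hyi⟩
    have := permDist_mul_one_le (x i) (y i)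
    simp only [Set.mem_setOf_eq, Pi.mul_apply] at *
    linarith
  inv_mem' := by
    intro x hx δ hδ
    refine Filter.mem_of_superset (hx δ hδ) ?_
    intro i hi
    simp only [Set.mem_setOf_eq, Pi.inv_apply] at *
    rwa [permDist_inv_one]

instance infinitesimals_normal {I : Type u} (U : Ultrafilter I) (n : I → ℕ) :
    (infinitesimals U n).Normal := by
  constructor
  intro x hx g δ hδ
  refine Filter.mem_of_superset (hx δ hδ) ?_
  intro i hi
  simp only [Set.mem_setOf_eq, Pi.mul_apply, Pi.inv_apply] at *
  rwa [permDist_conj_one]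

/-- The metric ultraproduct `∏_𝒰 Sym(n_i)` of finite symmetric groups: the quotient of the
direct product by the normal subgroup of infinitesimals. -/
noncomputable def MetricUltraproduct {I : Type u} (U : Ultrafilter I) (n : I → ℕ) : Type u :=
  (∀ i, Equiv.Perm (Fin (n i))) ⧸ infinitesimals U n

noncomputable instance {I : Type u} (U : Ultrafilter I) (n : I → ℕ) :
    Group (MetricUltraproduct U n) :=
  inferInstanceAs (Group ((∀ i, Equiv.Perm (Fin (n i))) ⧸ infinitesimals U n))


section Aux

open Finset

lemma permDist_comm {n : ℕ} (ρ σ : Equiv.Perm (Fin n)) : permDist ρ σ = permDist σ ρ := by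
  unfold permDist
  congr 3
  ext i
  simp [ne_comm]

lemma permDist_inv_mul_one {n : ℕ} (σ τ : Equiv.Perm (Fin n)) :
    permDist (σ⁻¹ * τ) 1 = permDist τ σ := by
  rw [permDist_eq_support, permDist_eq_support]
  simp

noncomputable def ampl {m : ℕ} (k : ℕ) (σ : Equiv.Perm (Fin m)) : Equiv.Perm (Fin (m ^ k)) :=
  finFunctionFinEquiv.permCongr (Equiv.piCongrRight fun _ : Fin k => σ)

lemma ampl_mul {m : ℕ} (k : ℕ) (σ τ : Equiv.Perm (Fin m)) :
    ampl k (σ * τ) = ampl k σ * ampl k τ := by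
  ext x
  simp [ampl, Equiv.permCongr_apply, Equiv.Perm.mul_apply]

lemma piCongrRight_one {m k : ℕ} :
    (Equiv.piCongrRight fun _ : Fin k => (1 : Equiv.Perm (Fin m))) = Equiv.refl _ := by
  ext v j
  rfl

lemma ampl_one {m : ℕ} (k : ℕ) : ampl k (1 : Equiv.Perm (Fin m)) = 1 := by
  ext x
  simp [ampl, Equiv.permCongr_apply, piCongrRight_one]

lemma ampl_agree_card {m k : ℕ} (σ τ : Equiv.Perm (Fin m)) :
    (univ.filter fun x => ampl k σ x = ampl k τ x).card
      = (univ.filter fun j => σ j = τ j).card ^ k := by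
  classical
  have e1 : {x : Fin (m^k) // ampl k σ x = ampl k τ x} ≃ (Fin k → {j : Fin m // σ j = τ j}) := by
    refine (finFunctionFinEquiv.symm.subtypeEquiv ?_).trans Equiv.subtypePiEquivPi
    intro x
    rw [show ampl k σ x = finFunctionFinEquiv
          ((Equiv.piCongrRight fun _ : Fin k => σ) (finFunctionFinEquiv.symm x)) from rfl,
        show ampl k τ x = finFunctionFinEquiv
          ((Equiv.piCongrRight fun _ : Fin k => τ) (finFunctionFinEquiv.symm x)) from rfl,
        finFunctionFinEquiv.apply_eq_iff_eq, funext_iff]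
    simp [Equiv.piCongrRight]
  rw [← Fintype.card_subtype, Fintype.card_congr e1, Fintype.card_fun, Fintype.card_fin,
    Fintype.card_subtype]

lemma card_agree_add {n : ℕ} (ρ σ : Equiv.Perm (Fin n)) :
    (univ.filter fun i => ρ i = σ i).card + (univ.filter fun i => ρ i ≠ σ i).card = n := by
  classical
  have := Finset.card_filter_add_card_filter_not (s := (univ : Finset (Fin n)))
    (p := fun i => ρ i = σ i)
  simpa using this

lemma permDist_eq_one_sub {n : ℕ} (hn : 0 < n) (ρ σ : Equiv.Perm (Fin n)) :
    permDist ρ σ = 1 - ((univ.filter fun i => ρ i = σ i).card : ℝ) / n := by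
  have h := card_agree_add ρ σ
  have hn' : (n : ℝ) ≠ 0 := Nat.cast_ne_zero.mpr hn.ne'
  rw [permDist, eq_sub_iff_add_eq, ← add_div, div_eq_one_iff_eq hn']
  push_cast [← h]
  ring

lemma permDist_nonneg {n : ℕ} (ρ σ : Equiv.Perm (Fin n)) : 0 ≤ permDist ρ σ := by
  unfold permDist; positivity

lemma permDist_le_one {n : ℕ} (ρ σ : Equiv.Perm (Fin n)) : permDist ρ σ ≤ 1 := by
  rcases Nat.eq_zero_or_pos n with h | h
  · subst h; simp [permDist]
  · rw [permDist, div_le_one (by exact_mod_cast h)]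
    exact_mod_cast Finset.card_le_card (Finset.filter_subset _ _) |>.trans (by simp)

lemma permDist_ampl {m k : ℕ} (hm : 0 < m) (σ τ : Equiv.Perm (Fin m)) :
    permDist (ampl k σ) (ampl k τ) = 1 - (1 - permDist σ τ) ^ k := by
  have hmk : 0 < m ^ k := pow_pos hm k
  have hm' : (m : ℝ) ≠ 0 := Nat.cast_ne_zero.mpr hm.ne'
  rw [permDist_eq_one_sub hmk, permDist_eq_one_sub hm, ampl_agree_card]
  have : ((univ.filter fun j => σ j = τ j).card : ℝ) ^ k / (m : ℝ) ^ k
      = (((univ.filter fun j => σ j = τ j).card : ℝ) / m) ^ k := by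
    rw [div_pow]
  rw [Nat.cast_pow, Nat.cast_pow, this]
  congr 1
  rw [sub_sub_cancel]

lemma one_sub_pow_le (k : ℕ) {d : ℝ} (h0 : 0 ≤ d) (h1 : d ≤ 1) :
    1 - (1 - d) ^ k ≤ k * d := by
  have hber := one_add_mul_le_pow (a := -d) (by linarith) k
  have h2 : (1 : ℝ) + (-d) = 1 - d := by ring
  rw [h2] at hber
  have : 1 + (k : ℝ) * (-d) = 1 - k * d := by ring
  rw [this] at hber
  linarith

end Aux

lemma mem_infinitesimals_iff {I : Type u} (U : Ultrafilter I) (n : I → ℕ)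
    (y : ∀ i, Equiv.Perm (Fin (n i))) :
    y ∈ infinitesimals U n ↔ ∀ δ : ℝ, 0 < δ → {i | permDist (y i) 1 < δ} ∈ U :=
  Iff.rfl


/-- **Proposition.** A group embeds in a metric ultraproduct of finite symmetric groups iff
every finite subset admits `(S,δ,n)`-approximations for every `δ > 0` (i.e., it is sofic). -/
theorem embeds_in_metric_ultraproduct_iff_approximations (G : Type u) [Group G] :
    (∃ (I : Type u) (U : Ultrafilter I) (n : I → ℕ)
        (f : G →* MetricUltraproduct U n), Function.Injective f) ↔
    (∀ S : Set G, S.Finite → ∀ δ : ℝ, 0 < δ →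
        ∃ (n : ℕ) (ψ : G → Equiv.Perm (Fin n)), IsApprox S δ ψ) := by
  classical
  constructor
  · rintro ⟨I, U, n, f, hf⟩ S hS δ hδ
    by_cases hS1 : ∀ g ∈ S, g = 1
    · refine ⟨1, fun _ => 1, ?_, ?_⟩
      · intro g hg h hh hgh
        simpa [permDist] using hδ
      · intro g hg hg1; exact absurd (hS1 g hg) hg1
    push_neg at hS1
    obtain ⟨g₀, hg₀S, hg₀⟩ := hS1
    set x : G → ∀ i, Equiv.Perm (Fin (n i)) := fun g => Quotient.out (f g) with hxdef
    have hx : ∀ g, (QuotientGroup.mk (x g) : MetricUltraproduct U n) = f g :=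
      fun g => QuotientGroup.out_eq' (f g)
    have hmulA : ∀ g h : G, ∀ δ' : ℝ, 0 < δ' →
        {i | permDist (x g i * x h i) (x (g * h) i) < δ'} ∈ U := by
      intro g h δ' hδ'
      have h1 : (QuotientGroup.mk (x g * x h) : MetricUltraproduct U n)
          = QuotientGroup.mk (x (g * h)) := by
        show (QuotientGroup.mk (x g * x h) : (∀ i, Equiv.Perm (Fin (n i))) ⧸ infinitesimals U n)
          = QuotientGroup.mk (x (g * h))
        rw [QuotientGroup.mk_mul]
        show (QuotientGroup.mk (x g) : MetricUltraproduct U n) * QuotientGroup.mk (x h)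
          = QuotientGroup.mk (x (g * h))
        rw [hx, hx, hx]
        exact (map_mul f g h).symm
      have h2 : (x g * x h)⁻¹ * x (g * h) ∈ infinitesimals U n := QuotientGroup.eq.mp h1
      have h3 := (mem_infinitesimals_iff U n _).mp h2 δ' hδ'
      refine Filter.mem_of_superset h3 ?_
      intro i hi
      simp only [Set.mem_setOf_eq, Pi.mul_apply, Pi.inv_apply] at *
      rwa [permDist_inv_mul_one, permDist_comm] at hi
    have hB : ∀ g, g ∈ S ∧ g ≠ 1 → ∃ ε, 0 < ε ∧ {i | permDist (x g i) 1 < ε} ∉ U := by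
      rintro g ⟨hg, hg1⟩
      by_contra hcon
      push_neg at hcon
      have hmem : x g ∈ infinitesimals U n := by
        rw [mem_infinitesimals_iff]
        intro δ₀ hδ₀
        exact hcon δ₀ hδ₀
      have hfg : f g = 1 := by
        rw [← hx g]
        exact (QuotientGroup.eq_one_iff (x g)).mpr hmem
      exact hg1 (hf (by rw [hfg, map_one]))
    set E : G → ℝ := fun g => if h : g ∈ S ∧ g ≠ 1 then (hB g h).choose else 1 with hEdef
    have hEpos : ∀ g, 0 < E g := by
      intro g
      by_cases h : g ∈ S ∧ g ≠ 1
      · have he : E g = (hB g h).choose := by simp only [hEdef]; exact dif_pos h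
        rw [he]; exact (hB g h).choose_spec.1
      · have he : E g = 1 := by simp only [hEdef]; exact dif_neg h
        rw [he]; norm_num
    have hEnot : ∀ g (h : g ∈ S ∧ g ≠ 1), {i | permDist (x g i) 1 < E g} ∉ U := by
      intro g h
      have he : E g = (hB g h).choose := by simp only [hEdef]; exact dif_pos h
      rw [he]
      exact (hB g h).choose_spec.2
    set Sfin := hS.toFinset with hSfin
    set T1 := Sfin.filter (· ≠ 1) with hT1
    have hg₀T1 : g₀ ∈ T1 := by
      rw [hT1, Finset.mem_filter]
      exact ⟨hS.mem_toFinset.mpr hg₀S, hg₀⟩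
    have hT1ne : T1.Nonempty := ⟨g₀, hg₀T1⟩
    set ε : ℝ := min (T1.inf' hT1ne E) 2⁻¹ with hεdef
    have hε : 0 < ε := by
      rw [hεdef]
      refine lt_min ?_ (by norm_num)
      rw [Finset.lt_inf'_iff]
      intro g _
      exact hEpos g
    have hεle : ∀ g ∈ T1, ε ≤ E g := by
      intro g hg
      exact le_trans (min_le_left _ _) (Finset.inf'_le E hg)
    have hε1 : (1 : ℝ) - ε < 1 := by linarith
    obtain ⟨k, hk⟩ := exists_pow_lt_of_lt_one hδ hε1
    set δ' : ℝ := δ / (k + 1) with hδ'def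
    have hδ' : 0 < δ' := by rw [hδ'def]; positivity
    have hkδ' : (k : ℝ) * δ' < δ := by
      rw [hδ'def]
      have hlt : (k : ℝ) / (k + 1) < 1 := by
        rw [div_lt_one (by positivity)]
        linarith
      calc (k : ℝ) * (δ / (k + 1)) = δ * ((k : ℝ) / (k + 1)) := by ring
        _ < δ * 1 := by exact mul_lt_mul_of_pos_left hlt hδ
        _ = δ := mul_one δ
    have hAmem : (⋂ g ∈ Sfin, ⋂ h ∈ Sfin,
        {i | permDist (x g i * x h i) (x (g * h) i) < δ'}) ∈ (U : Filter I) := by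
      rw [Filter.biInter_finset_mem]
      intro g _
      rw [Filter.biInter_finset_mem]
      intro h _
      exact hmulA g h δ' hδ'
    have hBmem : (⋂ g ∈ T1, {i | permDist (x g i) 1 < E g}ᶜ) ∈ (U : Filter I) := by
      rw [Filter.biInter_finset_mem]
      intro g hg
      rw [hT1, Finset.mem_filter] at hg
      exact Ultrafilter.compl_mem_iff_notMem.mpr (hEnot g ⟨hS.mem_toFinset.mp hg.1, hg.2⟩)
    obtain ⟨i, hiA, hiB⟩ := Filter.nonempty_of_mem (Filter.inter_mem hAmem hBmem)
    simp only [Set.mem_iInter, Set.mem_compl_iff, Set.mem_setOf_eq] at hiA hiB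
    have hiA' : ∀ g h : G, g ∈ S → h ∈ S →
        permDist (x g i * x h i) (x (g * h) i) < δ' := by
      intro g h hg hh
      exact hiA g (hS.mem_toFinset.mpr hg) h (hS.mem_toFinset.mpr hh)
    have hiB' : ∀ g ∈ S, g ≠ 1 → ε ≤ permDist (x g i) 1 := by
      intro g hg hg1
      have hgT1 : g ∈ T1 := by
        rw [hT1, Finset.mem_filter]
        exact ⟨hS.mem_toFinset.mpr hg, hg1⟩
      have h1 := hiB g hgT1
      have h2 := hεle g hgT1
      linarith [not_lt.mp h1]
    have hm : 0 < n i := by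
      by_contra hm0
      push_neg at hm0
      have hm0' : n i = 0 := Nat.le_zero.mp hm0
      have h1 := hiB' g₀ hg₀S hg₀
      have h2 : permDist (x g₀ i) 1 = 0 := by
        unfold permDist
        rw [show ((n i : ℝ)) = 0 from by exact_mod_cast hm0', div_zero]
      rw [h2] at h1
      linarith
    refine ⟨n i ^ k, fun g => ampl k (x g i), ?_, ?_⟩
    · intro g hg h hh hgh
      show permDist (ampl k (x g i) * ampl k (x h i)) (ampl k (x (g * h) i)) < δ
      rw [← ampl_mul, permDist_ampl hm]
      have hd := hiA' g h hg hh
      have h0 := permDist_nonneg (x g i * x h i) (x (g * h) i)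
      have h1 := permDist_le_one (x g i * x h i) (x (g * h) i)
      have hb := one_sub_pow_le k h0 h1
      have h3 : (k : ℝ) * permDist (x g i * x h i) (x (g * h) i) ≤ (k : ℝ) * δ' := by
        apply mul_le_mul_of_nonneg_left (le_of_lt hd) (Nat.cast_nonneg k)
      linarith
    · intro g hg hg1
      show 1 - δ < permDist (ampl k (x g i)) 1
      rw [show (1 : Equiv.Perm (Fin (n i ^ k))) = ampl k 1 from (ampl_one k).symm,
        permDist_ampl hm]
      have hd := hiB' g hg hg1
      have h1 := permDist_le_one (x g i) 1
      have h2 : (1 - permDist (x g i) 1) ^ k ≤ (1 - ε) ^ k :=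
        pow_le_pow_left₀ (by linarith) (by linarith) k
      linarith
  · intro H
    have happrox : ∀ p : Finset G × ℕ, ∃ (n : ℕ) (ψ : G → Equiv.Perm (Fin n)),
        IsApprox (↑p.1 : Set G) (1 / (p.2 + 1)) ψ := fun p =>
      H ↑p.1 p.1.finite_toSet (1 / (p.2 + 1)) (by positivity)
    choose nn ψ hψ using happrox
    haveI : Filter.NeBot (Filter.atTop : Filter (Finset G × ℕ)) := Filter.atTop_neBot
    set U : Ultrafilter (Finset G × ℕ) := Ultrafilter.of Filter.atTop with hUdef
    have hU : ∀ s : Set (Finset G × ℕ), s ∈ (Filter.atTop : Filter (Finset G × ℕ)) → s ∈ U :=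
      fun s hs => Ultrafilter.of_le _ hs
    set x : G → ∀ p : Finset G × ℕ, Equiv.Perm (Fin (nn p)) := fun g p => ψ p g with hxdef
    have hmul : ∀ a b : G, (QuotientGroup.mk (x (a * b)) : MetricUltraproduct U nn)
        = QuotientGroup.mk (x a * x b) := by
      intro a b
      show (QuotientGroup.mk (x (a * b)) : (∀ p, Equiv.Perm (Fin (nn p))) ⧸ infinitesimals U nn)
        = QuotientGroup.mk (x a * x b)
      rw [QuotientGroup.eq]
      rw [mem_infinitesimals_iff]
      intro δ hδ
      obtain ⟨k₀, hk₀⟩ := exists_nat_one_div_lt hδ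
      apply hU
      rw [Filter.mem_atTop_sets]
      refine ⟨({a, b, a * b}, k₀), ?_⟩
      rintro ⟨T, j⟩ hTj
      obtain ⟨hT, hj⟩ := hTj
      simp only [Set.mem_setOf_eq, Pi.mul_apply, Pi.inv_apply]
      rw [permDist_inv_mul_one]
      have haT : a ∈ (↑T : Set G) := by
        simp only [Finset.coe_mem, Finset.mem_coe]
        exact hT (by simp)
      have hbT : b ∈ (↑T : Set G) := by
        simp only [Finset.mem_coe]
        exact hT (by simp)
      have habT : a * b ∈ (↑T : Set G) := by
        simp only [Finset.mem_coe]
        exact hT (by simp)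
      have h1 := (hψ (T, j)).1 a haT b hbT habT
      have h2 : (1 : ℝ) / ((T, j).2 + 1) ≤ 1 / (k₀ + 1) := by
        apply one_div_le_one_div_of_le (by positivity)
        have : (k₀ : ℝ) ≤ (j : ℝ) := Nat.cast_le.mpr hj
        simp only
        linarith
      exact lt_trans (lt_of_lt_of_le h1 h2) hk₀
    refine ⟨Finset G × ℕ, U, nn,
      MonoidHom.mk' (fun g => (QuotientGroup.mk (x g) : MetricUltraproduct U nn))
        (fun a b => by
          show (QuotientGroup.mk (x (a * b)) : MetricUltraproduct U nn)
            = QuotientGroup.mk (x a) * QuotientGroup.mk (x b)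
          rw [hmul a b]
          rfl), ?_⟩
    rw [injective_iff_map_eq_one]
    intro g hg1
    by_contra hg
    have hmem : x g ∈ infinitesimals U nn := by
      rw [← QuotientGroup.eq_one_iff (x g)]
      exact hg1
    have h2 : {p | permDist (x g p) 1 < 1 / 2} ∈ U :=
      (mem_infinitesimals_iff U nn _).mp hmem (1 / 2) (by norm_num)
    have h3 : {p : Finset G × ℕ | g ∈ p.1 ∧ 1 ≤ p.2} ∈ U := by
      apply hU
      rw [Filter.mem_atTop_sets]
      refine ⟨({g}, 1), ?_⟩
      rintro ⟨T, j⟩ hTj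
      obtain ⟨hT, hj⟩ := hTj
      exact ⟨hT (by simp), hj⟩
    obtain ⟨p, hp2, hp3⟩ := Filter.nonempty_of_mem (Filter.inter_mem h2 h3)
    simp only [Set.mem_setOf_eq] at hp2 hp3
    have h4 := (hψ p).2 g (by exact hp3.1) hg
    have h5 : (1 : ℝ) / (p.2 + 1) ≤ 1 / 2 := by
      apply one_div_le_one_div_of_le (by norm_num)
      have : (1 : ℝ) ≤ (p.2 : ℝ) := by exact_mod_cast hp3.2
      linarith
    linarith
end

section
/- Suppose G₁ and G₂ are groups with internal semidirect product decompositions G₁ = H₁ ⋉ N₁ and G₂ = H₂ ⋉ N₂ (i.e. N_i is a normal subgroup of G_i, H_i is a subgroup of G_i, H_i ∩ N_i = {1}, and H_i·N_i = G_i), and let φ: H₁ → H₂ be a group isomorphism. Then in the amalgamated free product G₁ *_φ G₂ there is a split short exact sequence 1 → N₁ * N₂ → G₁ *_φ G₂ → H₁ → 1, where the map N₁ * N₂ → G₁ *_φ G₂ is the (injective) homomorphism induced by the natural inclusions of N₁ and N₂, its image is normal, and the splitting H₁ → G₁ *_φ G₂ is the natural inclusion; consequently G₁ *_φ G₂ ≅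 H₁ ⋉ (N₁ * N₂), with H₁ acting on N₁ by conjugation in G₁ and on N₂ by conjugation in G₂ via the isomorphism φ. -/
universe u v

section Amalgam

variable {G₁ : Type u} {G₂ : Type v} [Group G₁] [Group G₂]

/-- The relators identifying `H₁ ≤ G₁` with `H₂ ≤ G₂` via `φ` inside the free product. -/
def amalRels (H₁ : Subgroup G₁) (H₂ : Subgroup G₂) (φ : H₁ ≃* H₂) :
    Set (Monoid.Coprod G₁ G₂) :=
  ⋃ h : H₁, {Monoid.Coprod.inl (h : G₁) *
    (Monoid.Coprod.inr ((φ h : G₂)) : Monoid.Coprod G₁ G₂)⁻¹}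

/-- The amalgamated free product `G₁ ∗_φ G₂`: the quotient of the free product `G₁ ∗ G₂` by
the normal closure of `{h · φ(h)⁻¹ : h ∈ H₁}`. -/
def Amal (H₁ : Subgroup G₁) (H₂ : Subgroup G₂) (φ : H₁ ≃* H₂) : Type (max u v) :=
  Monoid.Coprod G₁ G₂ ⧸ Subgroup.normalClosure (amalRels H₁ H₂ φ)

instance (H₁ : Subgroup G₁) (H₂ : Subgroup G₂) (φ : H₁ ≃* H₂) : Group (Amal H₁ H₂ φ) :=
  inferInstanceAs (Group (Monoid.Coprod G₁ G₂ ⧸ Subgroup.normalClosure (amalRels H₁ H₂ φ)))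

/-- The quotient map `G₁ ∗ G₂ → G₁ ∗_φ G₂`. -/
def amalMk (H₁ : Subgroup G₁) (H₂ : Subgroup G₂) (φ : H₁ ≃* H₂) :
    Monoid.Coprod G₁ G₂ →* Amal H₁ H₂ φ :=
  QuotientGroup.mk' (Subgroup.normalClosure (amalRels H₁ H₂ φ))

/-- The homomorphism `N₁ ∗ N₂ → G₁ ∗_φ G₂` induced by the natural inclusions. -/
def amalJ (H₁ : Subgroup G₁) (H₂ : Subgroup G₂) (N₁ : Subgroup G₁) (N₂ : Subgroup G₂)
    (φ : H₁ ≃* H₂) : Monoid.Coprod N₁ N₂ →* Amal H₁ H₂ φ :=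
  Monoid.Coprod.lift ((amalMk H₁ H₂ φ).comp (Monoid.Coprod.inl.comp N₁.subtype))
    ((amalMk H₁ H₂ φ).comp (Monoid.Coprod.inr.comp N₂.subtype))

/-- The natural inclusion `H₁ → G₁ ∗_φ G₂` (through the first factor). -/
def amalS (H₁ : Subgroup G₁) (H₂ : Subgroup G₂) (φ : H₁ ≃* H₂) : H₁ →* Amal H₁ H₂ φ :=
  (amalMk H₁ H₂ φ).comp (Monoid.Coprod.inl.comp H₁.subtype)

end Amalgam

section Aux

variable {G : Type*} [Group G]

def projF (H N : Subgroup G) [N.Normal] : H →* G ⧸ N :=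
  (QuotientGroup.mk' N).comp H.subtype

lemma projF_bijective (H N : Subgroup G) [N.Normal] (hd : H ⊓ N = ⊥) (ht : H ⊔ N = ⊤) :
    Function.Bijective (projF H N) := by
  constructor
  · rw [← MonoidHom.ker_eq_bot_iff, eq_bot_iff]
    intro h hh
    have h1 : (h : G) ∈ N := by
      simpa [projF, QuotientGroup.eq_one_iff] using hh
    have h2 : (h : G) ∈ H ⊓ N := ⟨h.2, h1⟩
    rw [hd, Subgroup.mem_bot] at h2
    exact Subgroup.mem_bot.2 (Subtype.ext h2)
  · intro x
    obtain ⟨g, rfl⟩ := QuotientGroup.mk'_surjective N x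
    have hg : g ∈ H ⊔ N := by rw [ht]; trivial
    rw [← SetLike.mem_coe, Subgroup.mul_normal] at hg
    obtain ⟨h, hh, n, hn, rfl⟩ := hg
    refine ⟨⟨h, hh⟩, ?_⟩
    show ((h : G) : G ⧸ N) = ((h * n : G) : G ⧸ N)
    rw [QuotientGroup.eq]
    simpa [mul_assoc] using hn

noncomputable def projIso (H N : Subgroup G) [N.Normal] (hd : H ⊓ N = ⊥) (ht : H ⊔ N = ⊤) :
    H ≃* G ⧸ N :=
  MulEquiv.ofBijective _ (projF_bijective H N hd ht)

noncomputable def projH (H N : Subgroup G) [N.Normal] (hd : H ⊓ N = ⊥) (ht : H ⊔ N = ⊤) :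
    G →* H :=
  ((projIso H N hd ht).symm.toMonoidHom).comp (QuotientGroup.mk' N)

lemma projH_eq_of_mem (H N : Subgroup G) [N.Normal] (hd : H ⊓ N = ⊥) (ht : H ⊔ N = ⊤)
    (g : G) (hg : g ∈ H) : projH H N hd ht g = ⟨g, hg⟩ := by
  have h1 : projIso H N hd ht ⟨g, hg⟩ = ((g : G) : G ⧸ N) := rfl
  show (projIso H N hd ht).symm ((g : G) : G ⧸ N) = ⟨g, hg⟩
  rw [← h1, MulEquiv.symm_apply_apply]

lemma mk_projH (H N : Subgroup G) [N.Normal] (hd : H ⊓ N = ⊥) (ht : H ⊔ N = ⊤) (g : G) :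
    ((projH H N hd ht g : G) : G ⧸ N) = (g : G ⧸ N) := by
  show projIso H N hd ht (projH H N hd ht g) = (g : G ⧸ N)
  exact (projIso H N hd ht).apply_symm_apply _

lemma projH_inv_mul_mem (H N : Subgroup G) [N.Normal] (hd : H ⊓ N = ⊥) (ht : H ⊔ N = ⊤)
    (g : G) : (projH H N hd ht g : G)⁻¹ * g ∈ N := by
  rw [← QuotientGroup.eq]
  exact mk_projH H N hd ht g

lemma mul_projH_inv_mem (H N : Subgroup G) [N.Normal] (hd : H ⊓ N = ⊥) (ht : H ⊔ N = ⊤)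
    (g : G) : g * (projH H N hd ht g : G)⁻¹ ∈ N := by
  have h1 := projH_inv_mul_mem H N hd ht g
  have h2 := (by assumption : N.Normal).conj_mem _ h1 (projH H N hd ht g : G)
  have h3 : (projH H N hd ht g : G) * ((projH H N hd ht g : G)⁻¹ * g) *
      (projH H N hd ht g : G)⁻¹ = g * (projH H N hd ht g : G)⁻¹ := by group
  rwa [h3] at h2

lemma projH_eq_one_of_mem (H N : Subgroup G) [N.Normal] (hd : H ⊓ N = ⊥) (ht : H ⊔ N = ⊤)
    (g : G) (hg : g ∈ N) : projH H N hd ht g = 1 := by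
  show (projIso H N hd ht).symm ((g : G) : G ⧸ N) = 1
  have h1 : ((g : G) : G ⧸ N) = 1 := (QuotientGroup.eq_one_iff g).2 hg
  rw [h1, map_one]

end Aux

section Main

open Monoid

variable {G₁ : Type u} {G₂ : Type v} [Group G₁] [Group G₂]

/-- The conjugation action of `H₁` on `N₁ ∗ N₂`. -/
def amalAct (H₁ : Subgroup G₁) (H₂ : Subgroup G₂) (N₁ : Subgroup G₁) (N₂ : Subgroup G₂)
    [N₁.Normal] [N₂.Normal] (φ : H₁ ≃* H₂) : H₁ →* MulAut (Coprod N₁ N₂) :=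
  MonoidHom.mk' (fun h => MulEquiv.coprodCongr (MulAut.conjNormal (h : G₁))
      (MulAut.conjNormal ((φ h : G₂))))
    (by
      intro a b
      refine MulEquiv.ext fun x => ?_
      show Coprod.map _ _ x = Coprod.map _ _ (Coprod.map _ _ x)
      rw [Coprod.map_map]
      have e1 : ((MulAut.conjNormal ((a * b : H₁) : G₁) : N₁ ≃* N₁) : ↥N₁ →* ↥N₁) =
          ((MulAut.conjNormal ((a : H₁) : G₁) : N₁ ≃* N₁) : ↥N₁ →* ↥N₁).comp
            ((MulAut.conjNormal ((b : H₁) : G₁) : N₁ ≃* N₁) : ↥N₁ →* ↥N₁) := by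
        ext n
        simp [MulAut.conjNormal_apply, mul_assoc]
      have e2 : ((MulAut.conjNormal ((φ (a * b) : H₂) : G₂) : N₂ ≃* N₂) : ↥N₂ →* ↥N₂) =
          ((MulAut.conjNormal ((φ a : H₂) : G₂) : N₂ ≃* N₂) : ↥N₂ →* ↥N₂).comp
            ((MulAut.conjNormal ((φ b : H₂) : G₂) : N₂ ≃* N₂) : ↥N₂ →* ↥N₂) := by
        ext n
        simp [MulAut.conjNormal_apply, mul_assoc]
      rw [e1, e2])

lemma amalAct_inl (H₁ : Subgroup G₁) (H₂ : Subgroup G₂) (N₁ : Subgroup G₁) (N₂ : Subgroup G₂)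
    [hN₁ : N₁.Normal] [N₂.Normal] (φ : H₁ ≃* H₂) (h : H₁) (x : N₁) :
    amalAct H₁ H₂ N₁ N₂ φ h (Coprod.inl x) =
      Coprod.inl ⟨(h : G₁) * (x : G₁) * (h : G₁)⁻¹, hN₁.conj_mem x x.2 h⟩ := by
  show Coprod.map _ _ (Coprod.inl x) = _
  rw [Coprod.map_apply_inl]
  congr 1

lemma amalAct_inr (H₁ : Subgroup G₁) (H₂ : Subgroup G₂) (N₁ : Subgroup G₁) (N₂ : Subgroup G₂)
    [N₁.Normal] [hN₂ : N₂.Normal] (φ : H₁ ≃* H₂) (h : H₁) (x : N₂) :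
    amalAct H₁ H₂ N₁ N₂ φ h (Coprod.inr x) =
      Coprod.inr ⟨(φ h : G₂) * (x : G₂) * (φ h : G₂)⁻¹, hN₂.conj_mem x x.2 (φ h)⟩ := by
  show Coprod.map _ _ (Coprod.inr x) = _
  rw [Coprod.map_apply_inr]
  congr 1

variable (H₁ : Subgroup G₁) (H₂ : Subgroup G₂) (N₁ : Subgroup G₁) (N₂ : Subgroup G₂)
  [N₁.Normal] [N₂.Normal]
  (hd₁ : H₁ ⊓ N₁ = ⊥) (hd₂ : H₂ ⊓ N₂ = ⊥) (ht₁ : H₁ ⊔ N₁ = ⊤) (ht₂ : H₂ ⊔ N₂ = ⊤)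
  (φ : H₁ ≃* H₂)

/-- First factor map into the semidirect product model. -/
noncomputable def amalPsi₁ : G₁ →* Coprod ↥N₁ ↥N₂ ⋊[amalAct H₁ H₂ N₁ N₂ φ] ↥H₁ where
  toFun g := ⟨Coprod.inl ⟨g * ((projH H₁ N₁ hd₁ ht₁ g : G₁))⁻¹, mul_projH_inv_mem H₁ N₁ hd₁ ht₁ g⟩,
    projH H₁ N₁ hd₁ ht₁ g⟩
  map_one' := by
    ext
    · show Coprod.inl _ = (1 : Coprod ↥N₁ ↥N₂)
      rw [← map_one (Coprod.inl : ↥N₁ →* Coprod ↥N₁ ↥N₂)]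
      congr 1
      ext
      simp
    · simp
  map_mul' g g' := by
    have hpm : projH H₁ N₁ hd₁ ht₁ (g * g') =
        projH H₁ N₁ hd₁ ht₁ g * projH H₁ N₁ hd₁ ht₁ g' := map_mul _ _ _
    ext
    · show Coprod.inl _ = Coprod.inl _ * (amalAct H₁ H₂ N₁ N₂ φ _ (Coprod.inl _))
      rw [amalAct_inl, ← map_mul]
      congr 1
      ext
      push_cast [hpm]
      group
    · exact congrArg Subtype.val hpm
  
/-- Second factor map into the semidirect product model. -/
noncomputable def amalPsi₂ : G₂ →* Coprod ↥N₁ ↥N₂ ⋊[amalAct H₁ H₂ N₁ N₂ φ] ↥H₁ where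
  toFun g := ⟨Coprod.inr ⟨g * ((projH H₂ N₂ hd₂ ht₂ g : G₂))⁻¹, mul_projH_inv_mem H₂ N₂ hd₂ ht₂ g⟩,
    φ.symm (projH H₂ N₂ hd₂ ht₂ g)⟩
  map_one' := by
    ext
    · show Coprod.inr _ = (1 : Coprod ↥N₁ ↥N₂)
      rw [← map_one (Coprod.inr : ↥N₂ →* Coprod ↥N₁ ↥N₂)]
      congr 1
      ext
      simp
    · simp
  map_mul' g g' := by
    have hpm : projH H₂ N₂ hd₂ ht₂ (g * g') =
        projH H₂ N₂ hd₂ ht₂ g * projH H₂ N₂ hd₂ ht₂ g' := map_mul _ _ _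
    ext
    · show Coprod.inr _ = Coprod.inr _ * (amalAct H₁ H₂ N₁ N₂ φ _ (Coprod.inr _))
      rw [amalAct_inr, ← map_mul]
      congr 1
      ext
      rw [MulEquiv.apply_symm_apply]
      push_cast [hpm]
      group
    · have h2 : φ.symm (projH H₂ N₂ hd₂ ht₂ (g * g')) =
          φ.symm (projH H₂ N₂ hd₂ ht₂ g) * φ.symm (projH H₂ N₂ hd₂ ht₂ g') := by
        rw [hpm, map_mul]
      exact congrArg Subtype.val h2

end Main

section Main2

open Monoid

variable {G₁ : Type u} {G₂ : Type v} [Group G₁] [Group G₂]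
  (H₁ : Subgroup G₁) (H₂ : Subgroup G₂) (N₁ : Subgroup G₁) (N₂ : Subgroup G₂)
  [N₁.Normal] [N₂.Normal]
  (hd₁ : H₁ ⊓ N₁ = ⊥) (hd₂ : H₂ ⊓ N₂ = ⊥) (ht₁ : H₁ ⊔ N₁ = ⊤) (ht₂ : H₂ ⊔ N₂ = ⊤)
  (φ : H₁ ≃* H₂)

lemma amalPsi₁_of_mem (h : H₁) :
    amalPsi₁ H₁ H₂ N₁ N₂ hd₁ ht₁ φ (h : G₁) = ⟨1, h⟩ := by
  have hp : projH H₁ N₁ hd₁ ht₁ (h : G₁) = h := by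
    rw [projH_eq_of_mem H₁ N₁ hd₁ ht₁ _ h.2]
  ext
  · show Coprod.inl _ = (1 : Coprod ↥N₁ ↥N₂)
    rw [← map_one (Coprod.inl : ↥N₁ →* Coprod ↥N₁ ↥N₂)]
    congr 1
    ext
    simp [hp]
  · exact congrArg Subtype.val hp

lemma amalPsi₂_of_mem (h : H₁) :
    amalPsi₂ H₁ H₂ N₁ N₂ hd₂ ht₂ φ ((φ h : H₂) : G₂) = ⟨1, h⟩ := by
  have hp : projH H₂ N₂ hd₂ ht₂ ((φ h : H₂) : G₂) = φ h := by
    rw [projH_eq_of_mem H₂ N₂ hd₂ ht₂ _ (φ h).2]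
  have hsy : φ.symm (projH H₂ N₂ hd₂ ht₂ ((φ h : H₂) : G₂)) = h := by
    rw [hp, MulEquiv.symm_apply_apply]
  ext
  · show Coprod.inr _ = (1 : Coprod ↥N₁ ↥N₂)
    rw [← map_one (Coprod.inr : ↥N₂ →* Coprod ↥N₁ ↥N₂)]
    congr 1
    ext
    simp [hp]
  · exact congrArg Subtype.val hsy

lemma amal_rels_le_ker :
    Subgroup.normalClosure (amalRels H₁ H₂ φ) ≤
      (Coprod.lift (amalPsi₁ H₁ H₂ N₁ N₂ hd₁ ht₁ φ) (amalPsi₂ H₁ H₂ N₁ N₂ hd₂ ht₂ φ)).ker := by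
  apply Subgroup.normalClosure_le_normal
  intro x hx
  rw [amalRels, Set.mem_iUnion] at hx
  obtain ⟨h, hh⟩ := hx
  rw [Set.mem_singleton_iff] at hh
  subst hh
  rw [SetLike.mem_coe, MonoidHom.mem_ker, map_mul, map_inv, Coprod.lift_apply_inl,
    Coprod.lift_apply_inr, amalPsi₁_of_mem, amalPsi₂_of_mem, mul_inv_cancel]

/-- The map from the amalgam to the semidirect product model. -/
noncomputable def amalPsi : Amal H₁ H₂ φ →* Coprod ↥N₁ ↥N₂ ⋊[amalAct H₁ H₂ N₁ N₂ φ] ↥H₁ :=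
  QuotientGroup.lift _
    (Coprod.lift (amalPsi₁ H₁ H₂ N₁ N₂ hd₁ ht₁ φ) (amalPsi₂ H₁ H₂ N₁ N₂ hd₂ ht₂ φ))
    fun x hx => MonoidHom.mem_ker.mp
      (amal_rels_le_ker H₁ H₂ N₁ N₂ hd₁ hd₂ ht₁ ht₂ φ hx)

lemma amalPsi_mk (x : Coprod G₁ G₂) :
    amalPsi H₁ H₂ N₁ N₂ hd₁ hd₂ ht₁ ht₂ φ (amalMk H₁ H₂ φ x) =
      Coprod.lift (amalPsi₁ H₁ H₂ N₁ N₂ hd₁ ht₁ φ) (amalPsi₂ H₁ H₂ N₁ N₂ hd₂ ht₂ φ) x :=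
  rfl

lemma amalPsi_J (x : Coprod ↥N₁ ↥N₂) :
    amalPsi H₁ H₂ N₁ N₂ hd₁ hd₂ ht₁ ht₂ φ (amalJ H₁ H₂ N₁ N₂ φ x) =
      SemidirectProduct.inl x := by
  induction x using Coprod.induction_on with
  | inl n =>
    have h0 : amalJ H₁ H₂ N₁ N₂ φ (Coprod.inl n) = amalMk H₁ H₂ φ (Coprod.inl (n : G₁)) := rfl
    rw [h0, amalPsi_mk, Coprod.lift_apply_inl]
    have hp : projH H₁ N₁ hd₁ ht₁ (n : G₁) = 1 :=
      projH_eq_one_of_mem H₁ N₁ hd₁ ht₁ _ n.2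
    ext
    · show Coprod.inl _ = Coprod.inl n
      congr 1
      ext
      simp [hp]
    · exact congrArg Subtype.val hp
  | inr n =>
    have h0 : amalJ H₁ H₂ N₁ N₂ φ (Coprod.inr n) = amalMk H₁ H₂ φ (Coprod.inr (n : G₂)) := rfl
    rw [h0, amalPsi_mk, Coprod.lift_apply_inr]
    have hp : projH H₂ N₂ hd₂ ht₂ (n : G₂) = 1 :=
      projH_eq_one_of_mem H₂ N₂ hd₂ ht₂ _ n.2
    have hsy : φ.symm (projH H₂ N₂ hd₂ ht₂ (n : G₂)) = 1 := by rw [hp, map_one]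
    ext
    · show Coprod.inr _ = Coprod.inr n
      congr 1
      ext
      simp [hp]
    · exact congrArg Subtype.val hsy
  | mul x y hx hy =>
    rw [map_mul, map_mul, hx, hy, map_mul]

include hd₁ hd₂ ht₁ ht₂ in
lemma amalJ_inj : Function.Injective (amalJ H₁ H₂ N₁ N₂ φ) := by
  intro a b hab
  apply SemidirectProduct.inl_injective (φ := amalAct H₁ H₂ N₁ N₂ φ)
  rw [← amalPsi_J H₁ H₂ N₁ N₂ hd₁ hd₂ ht₁ ht₂ φ a,
    ← amalPsi_J H₁ H₂ N₁ N₂ hd₁ hd₂ ht₁ ht₂ φ b, hab]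

/-- The retraction onto `H₁`. -/
noncomputable def amalRho : Amal H₁ H₂ φ →* H₁ :=
  SemidirectProduct.rightHom.comp (amalPsi H₁ H₂ N₁ N₂ hd₁ hd₂ ht₁ ht₂ φ)

lemma amalRho_S (h : H₁) :
    amalRho H₁ H₂ N₁ N₂ hd₁ hd₂ ht₁ ht₂ φ (amalS H₁ H₂ φ h) = h := by
  have h0 : amalS H₁ H₂ φ h = amalMk H₁ H₂ φ (Coprod.inl (h : G₁)) := rfl
  rw [amalRho, MonoidHom.comp_apply, h0, amalPsi_mk, Coprod.lift_apply_inl, amalPsi₁_of_mem]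
  rfl

lemma amalRho_J (x : Coprod ↥N₁ ↥N₂) :
    amalRho H₁ H₂ N₁ N₂ hd₁ hd₂ ht₁ ht₂ φ (amalJ H₁ H₂ N₁ N₂ φ x) = 1 := by
  rw [amalRho, MonoidHom.comp_apply, amalPsi_J, SemidirectProduct.rightHom_inl]

lemma amalS_eq (h : H₁) :
    amalS H₁ H₂ φ h = amalMk H₁ H₂ φ (Coprod.inr ((φ h : H₂) : G₂)) := by
  have hrel : Coprod.inl ((h : H₁) : G₁) *
      (Coprod.inr ((φ h : H₂) : G₂) : Coprod G₁ G₂)⁻¹ ∈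
      Subgroup.normalClosure (amalRels H₁ H₂ φ) :=
    Subgroup.subset_normalClosure (Set.mem_iUnion.2 ⟨h, rfl⟩)
  have h1 : amalMk H₁ H₂ φ (Coprod.inl ((h : H₁) : G₁) *
      (Coprod.inr ((φ h : H₂) : G₂) : Coprod G₁ G₂)⁻¹) = 1 :=
    (QuotientGroup.eq_one_iff _).2 hrel
  rw [map_mul, map_inv] at h1
  exact mul_inv_eq_one.mp h1

lemma conj_inl [hN₁ : N₁.Normal] (h : H₁) (x : N₁) :
    amalS H₁ H₂ φ h * amalJ H₁ H₂ N₁ N₂ φ (Coprod.inl x) * (amalS H₁ H₂ φ h)⁻¹ =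
      amalJ H₁ H₂ N₁ N₂ φ
        (Coprod.inl ⟨(h : G₁) * (x : G₁) * (h : G₁)⁻¹, hN₁.conj_mem x x.2 h⟩) := by
  show amalMk H₁ H₂ φ (Coprod.inl (h : G₁)) * amalMk H₁ H₂ φ (Coprod.inl (x : G₁)) *
      (amalMk H₁ H₂ φ (Coprod.inl (h : G₁)))⁻¹ =
      amalMk H₁ H₂ φ (Coprod.inl ((h : G₁) * (x : G₁) * (h : G₁)⁻¹))
  simp only [← map_inv, ← map_mul]

lemma conj_inr [hN₂ : N₂.Normal] (h : H₁) (x : N₂) :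
    amalS H₁ H₂ φ h * amalJ H₁ H₂ N₁ N₂ φ (Coprod.inr x) * (amalS H₁ H₂ φ h)⁻¹ =
      amalJ H₁ H₂ N₁ N₂ φ
        (Coprod.inr ⟨(φ h : G₂) * (x : G₂) * (φ h : G₂)⁻¹, hN₂.conj_mem x x.2 (φ h)⟩) := by
  rw [amalS_eq]
  show amalMk H₁ H₂ φ (Coprod.inr ((φ h : H₂) : G₂)) *
      amalMk H₁ H₂ φ (Coprod.inr (x : G₂)) *
      (amalMk H₁ H₂ φ (Coprod.inr ((φ h : H₂) : G₂)))⁻¹ =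
      amalMk H₁ H₂ φ (Coprod.inr ((φ h : G₂) * (x : G₂) * (φ h : G₂)⁻¹))
  simp only [← map_inv, ← map_mul]

lemma conj_J (h : H₁) (x : Coprod ↥N₁ ↥N₂) :
    amalS H₁ H₂ φ h * amalJ H₁ H₂ N₁ N₂ φ x * (amalS H₁ H₂ φ h)⁻¹ =
      amalJ H₁ H₂ N₁ N₂ φ (amalAct H₁ H₂ N₁ N₂ φ h x) := by
  induction x using Coprod.induction_on with
  | inl n => rw [amalAct_inl]; exact conj_inl H₁ H₂ N₁ N₂ φ h n
  | inr n => rw [amalAct_inr]; exact conj_inr H₁ H₂ N₁ N₂ φ h n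
  | mul x y hx hy =>
    rw [map_mul, map_mul]
    calc amalS H₁ H₂ φ h * (amalJ H₁ H₂ N₁ N₂ φ x * amalJ H₁ H₂ N₁ N₂ φ y) *
          (amalS H₁ H₂ φ h)⁻¹
        = (amalS H₁ H₂ φ h * amalJ H₁ H₂ N₁ N₂ φ x * (amalS H₁ H₂ φ h)⁻¹) *
          (amalS H₁ H₂ φ h * amalJ H₁ H₂ N₁ N₂ φ y * (amalS H₁ H₂ φ h)⁻¹) := by group
      _ = _ := by rw [hx, hy, ← map_mul]

end Main2

/-- **Lemma.** If `G₁ = H₁ ⋉ N₁` and `G₂ = H₂ ⋉ N₂` are internal semidirect products and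
`φ : H₁ ≅ H₂`, then there is a split short exact sequence
`1 → N₁ ∗ N₂ → G₁ ∗_φ G₂ → H₁ → 1`, the splitting being the natural inclusion of `H₁`, and
`H₁` acts on `N₁` by conjugation in `G₁` and on `N₂` by conjugation in `G₂` via `φ`; hence
`G₁ ∗_φ G₂ ≅ H₁ ⋉ (N₁ ∗ N₂)`. -/
theorem amalgam_of_semidirect_is_semidirect {G₁ : Type u} {G₂ : Type v}
    [Group G₁] [Group G₂] (H₁ : Subgroup G₁) (H₂ : Subgroup G₂)
    (N₁ : Subgroup G₁) (N₂ : Subgroup G₂) (hN₁ : N₁.Normal) (hN₂ : N₂.Normal)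
    (hd₁ : H₁ ⊓ N₁ = ⊥) (hd₂ : H₂ ⊓ N₂ = ⊥)
    (ht₁ : H₁ ⊔ N₁ = ⊤) (ht₂ : H₂ ⊔ N₂ = ⊤)
    (φ : H₁ ≃* H₂) :
    Function.Injective (amalJ H₁ H₂ N₁ N₂ φ) ∧
    ((amalJ H₁ H₂ N₁ N₂ φ).range).Normal ∧
    ∃ ρ : Amal H₁ H₂ φ →* H₁,
      Function.Surjective ρ ∧
      ρ.ker = (amalJ H₁ H₂ N₁ N₂ φ).range ∧
      ρ.comp (amalS H₁ H₂ φ) = MonoidHom.id H₁ ∧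
      (∀ (h : H₁) (x : N₁),
        amalS H₁ H₂ φ h * amalJ H₁ H₂ N₁ N₂ φ (Monoid.Coprod.inl x) * (amalS H₁ H₂ φ h)⁻¹ =
          amalJ H₁ H₂ N₁ N₂ φ
            (Monoid.Coprod.inl ⟨(h : G₁) * (x : G₁) * (h : G₁)⁻¹, hN₁.conj_mem x x.2 h⟩)) ∧
      (∀ (h : H₁) (x : N₂),
        amalS H₁ H₂ φ h * amalJ H₁ H₂ N₁ N₂ φ (Monoid.Coprod.inr x) * (amalS H₁ H₂ φ h)⁻¹ =
          amalJ H₁ H₂ N₁ N₂ φ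
            (Monoid.Coprod.inr
              ⟨(φ h : G₂) * (x : G₂) * (φ h : G₂)⁻¹, hN₂.conj_mem x x.2 (φ h)⟩)) := by
  haveI := hN₁
  haveI := hN₂
  have hmk : Function.Surjective (amalMk H₁ H₂ φ) :=
    QuotientGroup.mk'_surjective _
  have hTop : (amalJ H₁ H₂ N₁ N₂ φ).range ⊔ (amalS H₁ H₂ φ).range = ⊤ := by
    rw [eq_top_iff]
    rintro y -
    obtain ⟨x, rfl⟩ := hmk y
    induction x using Monoid.Coprod.induction_on with
    | inl g =>
      have hdec : amalMk H₁ H₂ φ (Monoid.Coprod.inl g) =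
          amalS H₁ H₂ φ (projH H₁ N₁ hd₁ ht₁ g) *
          amalJ H₁ H₂ N₁ N₂ φ (Monoid.Coprod.inl ⟨(projH H₁ N₁ hd₁ ht₁ g : G₁)⁻¹ * g,
            projH_inv_mul_mem H₁ N₁ hd₁ ht₁ g⟩) := by
        show amalMk H₁ H₂ φ (Monoid.Coprod.inl g) =
          amalMk H₁ H₂ φ (Monoid.Coprod.inl ((projH H₁ N₁ hd₁ ht₁ g : G₁))) *
          amalMk H₁ H₂ φ (Monoid.Coprod.inl ((projH H₁ N₁ hd₁ ht₁ g : G₁)⁻¹ * g))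
        rw [← map_mul, ← map_mul]
        congr 2
        group
      rw [hdec]
      exact mul_mem (Subgroup.mem_sup_right ⟨_, rfl⟩) (Subgroup.mem_sup_left ⟨_, rfl⟩)
    | inr g =>
      have hS : amalS H₁ H₂ φ (φ.symm (projH H₂ N₂ hd₂ ht₂ g)) =
          amalMk H₁ H₂ φ (Monoid.Coprod.inr ((projH H₂ N₂ hd₂ ht₂ g : G₂))) := by
        rw [amalS_eq]
        congr 3
        exact φ.apply_symm_apply _
      have hdec : amalMk H₁ H₂ φ (Monoid.Coprod.inr g) =
          amalS H₁ H₂ φ (φ.symm (projH H₂ N₂ hd₂ ht₂ g)) *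
          amalJ H₁ H₂ N₁ N₂ φ (Monoid.Coprod.inr ⟨(projH H₂ N₂ hd₂ ht₂ g : G₂)⁻¹ * g,
            projH_inv_mul_mem H₂ N₂ hd₂ ht₂ g⟩) := by
        rw [hS]
        show amalMk H₁ H₂ φ (Monoid.Coprod.inr g) =
          amalMk H₁ H₂ φ (Monoid.Coprod.inr ((projH H₂ N₂ hd₂ ht₂ g : G₂))) *
          amalMk H₁ H₂ φ (Monoid.Coprod.inr ((projH H₂ N₂ hd₂ ht₂ g : G₂)⁻¹ * g))
        rw [← map_mul, ← map_mul]
        congr 2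
        group
      rw [hdec]
      exact mul_mem (Subgroup.mem_sup_right ⟨_, rfl⟩) (Subgroup.mem_sup_left ⟨_, rfl⟩)
    | mul x y hx hy =>
      rw [map_mul]
      exact mul_mem hx hy
  have hR : ((amalJ H₁ H₂ N₁ N₂ φ).range).Normal := by
    rw [← Subgroup.normalizer_eq_top_iff, eq_top_iff, ← hTop, sup_le_iff]
    refine ⟨Subgroup.le_normalizer, ?_⟩
    rintro - ⟨h, rfl⟩
    rw [Subgroup.mem_normalizer_iff]
    intro y
    constructor
    · rintro ⟨x, rfl⟩
      exact ⟨amalAct H₁ H₂ N₁ N₂ φ h x, (conj_J H₁ H₂ N₁ N₂ φ h x).symm⟩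
    · rintro ⟨x, hx⟩
      refine ⟨(amalAct H₁ H₂ N₁ N₂ φ h)⁻¹ x, ?_⟩
      have h2 := conj_J H₁ H₂ N₁ N₂ φ h ((amalAct H₁ H₂ N₁ N₂ φ h)⁻¹ x)
      rw [MulAut.apply_inv_self] at h2
      have h3 := h2.trans hx
      exact mul_left_cancel (mul_right_cancel h3)
  have hker : (amalRho H₁ H₂ N₁ N₂ hd₁ hd₂ ht₁ ht₂ φ).ker = (amalJ H₁ H₂ N₁ N₂ φ).range := by
    apply le_antisymm
    · intro y hy
      have hy1 : y ∈ ((amalS H₁ H₂ φ).range ⊔ (amalJ H₁ H₂ N₁ N₂ φ).range : Subgroup _) := by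
        rw [sup_comm, hTop]
        trivial
      haveI := hR
      rw [← SetLike.mem_coe, Subgroup.mul_normal] at hy1
      obtain ⟨s, hs, r, hr, rfl⟩ := hy1
      obtain ⟨h, rfl⟩ := hs
      obtain ⟨x, rfl⟩ := hr
      rw [MonoidHom.mem_ker, map_mul, amalRho_S, amalRho_J, mul_one] at hy
      simp only [hy, map_one, one_mul]
      exact ⟨x, rfl⟩
    · rintro - ⟨x, rfl⟩
      rw [MonoidHom.mem_ker]
      exact amalRho_J H₁ H₂ N₁ N₂ hd₁ hd₂ ht₁ ht₂ φ x
  refine ⟨amalJ_inj H₁ H₂ N₁ N₂ hd₁ hd₂ ht₁ ht₂ φ, hR,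
    amalRho H₁ H₂ N₁ N₂ hd₁ hd₂ ht₁ ht₂ φ, ?_, hker, ?_, ?_, ?_⟩
  · exact fun h => ⟨amalS H₁ H₂ φ h, amalRho_S H₁ H₂ N₁ N₂ hd₁ hd₂ ht₁ ht₂ φ h⟩
  · ext h
    exact congrArg Subtype.val (amalRho_S H₁ H₂ N₁ N₂ hd₁ hd₂ ht₁ ht₂ φ h)
  · exact conj_inl H₁ H₂ N₁ N₂ φ
  · exact conj_inr H₁ H₂ N₁ N₂ φ
end

section
/- Let G be a group, let A, B ≤ G be subgroups, let φ: B → A be a group isomorphism, and suppose there exists a group homomorphism π: G → A × B with π(a) = (a,1) for all a ∈ A and π(b) = (1,b) for all b ∈ B. Then for every integer k ≥ 3 there exists a group homomorphism μ̄: bar-Hig_k(G,φ) → G^k such that for each l ∈ {1,…,k} the composition μ̄ ∘ ι_l : G → G^k with the natural map ι_l of the l-th copy of G into bar-Hig_k(G,φ) is injective; moreover there exists a group homomorphism μ: Hig_k(G,φ) → C_k ⋉ G^k, where the cyclic group C_k of order k acts on G^k by cyclically permuting the coordinates, whose composition with the natural map ι: G → Hig_k(G,φ) is injective. -/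
universe u

variable (G : Type u) [Group G] (A B : Subgroup G) (φ : B ≃* A) (k : ℕ)

/-- Defining relators of `bar-Hig_k(G, φ)`: `b_i φ_i(b_i)⁻¹` with the copies of `G`
indexed by `ℤ/kℤ`. -/
def barHigRels : Set (Monoid.CoprodI (fun _ : ZMod k => G)) :=
  ⋃ (i : ZMod k) (b : B),
    {Monoid.CoprodI.of (M := fun _ : ZMod k => G) (i := i) ((b : G)) *
      (Monoid.CoprodI.of (M := fun _ : ZMod k => G) (i := i + 1) ((φ b : G)))⁻¹}

/-- `bar-Hig_k(G, φ)`: the cyclic amalgam of `k` copies of `G`. -/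
def BarHig : Type u :=
  Monoid.CoprodI (fun _ : ZMod k => G) ⧸ Subgroup.normalClosure (barHigRels G A B φ k)

instance : Group (BarHig G A B φ k) :=
  inferInstanceAs (Group (Monoid.CoprodI (fun _ : ZMod k => G) ⧸
    Subgroup.normalClosure (barHigRels G A B φ k)))

/-- The natural map `ι_l : G → bar-Hig_k(G, φ)` of the `l`-th copy. -/
def barHigIota (l : ZMod k) : G →* BarHig G A B φ k :=
  (QuotientGroup.mk' (Subgroup.normalClosure (barHigRels G A B φ k))).comp
    (Monoid.CoprodI.of (M := fun _ : ZMod k => G) (i := l))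

/-- The action of the cyclic group `C_k = ℤ/kℤ` on `G^k` cyclically permuting coordinates. -/
def cycAut : Multiplicative (ZMod k) →* MulAut (ZMod k → G) where
  toFun c :=
    { toFun := fun g i => g (i - c.toAdd)
      invFun := fun g i => g (i + c.toAdd)
      left_inv := fun g => funext fun i => by simp
      right_inv := fun g => funext fun i => by simp
      map_mul' := fun g h => rfl }
  map_one' := by
    ext g i
    simp
  map_mul' := fun c d => by
    ext g i
    simp [sub_sub]

def dmap (π : G →* A × B) (j : ZMod k) : G →* G :=
  if j = 0 then MonoidHom.id G
  else if j = 1 then A.subtype.comp (φ.toMonoidHom.comp ((MonoidHom.snd A B).comp π))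
  else if j = -1 then B.subtype.comp (φ.symm.toMonoidHom.comp ((MonoidHom.fst A B).comp π))
  else 1

theorem dmap_val_b (π : G →* A × B) (hπB : ∀ b : B, π (b : G) = (1, b)) (j : ZMod k) (b : B) :
    dmap G A B φ k π j (b : G) = if j = 0 then (b : G) else if j = 1 then ((φ b : G)) else 1 := by
  simp only [dmap]
  split_ifs with h0 h1 hm1 <;>
    simp [MonoidHom.comp_apply, hπB]

theorem dmap_val_phib (hk : 3 ≤ k) (π : G →* A × B) (hπA : ∀ a : A, π (a : G) = (a, 1))
    (j : ZMod k) (b : B) :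
    dmap G A B φ k π j ((φ b : G)) =
      if j = 0 then ((φ b : G)) else if j = -1 then (b : G) else 1 := by
  haveI : NeZero k := ⟨by omega⟩
  have h2 : (2 : ZMod k) ≠ 0 := by
    intro h
    have h' : k ∣ 2 := (ZMod.natCast_eq_zero_iff 2 k).mp (by exact_mod_cast h)
    have := Nat.le_of_dvd (by norm_num) h'
    omega
  simp only [dmap]
  split_ifs with h0 h1 hm1 hm1' <;>
    first
      | (exfalso; exact h2 (by linear_combination hm1 - h1))
      | simp [MonoidHom.comp_apply, hπA]

theorem dmap_key (hk : 3 ≤ k) (π : G →* A × B) (hπA : ∀ a : A, π (a : G) = (a, 1))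
    (hπB : ∀ b : B, π (b : G) = (1, b)) (j : ZMod k) (b : B) :
    dmap G A B φ k π j (b : G) = dmap G A B φ k π (j - 1) ((φ b : G)) := by
  haveI : NeZero k := ⟨by omega⟩
  have h1 : (1 : ZMod k) ≠ 0 := by
    intro h
    have h' : k ∣ 1 := (ZMod.natCast_eq_zero_iff 1 k).mp (by exact_mod_cast h)
    have := Nat.le_of_dvd (by norm_num) h'
    omega
  rw [dmap_val_b G A B φ k π hπB, dmap_val_phib G A B φ k hk π hπA]
  have c1 : (j - 1 = 0) ↔ (j = 1) := sub_eq_zero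
  have c2 : (j - 1 = -1) ↔ (j = 0) := by
    rw [sub_eq_iff_eq_add]
    simp
  rw [if_congr c1 rfl rfl, if_congr c2 rfl rfl]
  split_ifs with h0 h1' <;>
    first
      | rfl
      | (exfalso; exact h1 (by linear_combination h0 - h1'))

/-- The homomorphism `ρ_l : G → G^k`. -/
def rhoHom (π : G →* A × B) (l : ZMod k) : G →* (ZMod k → G) :=
  Pi.monoidHom fun i => dmap G A B φ k π (i - l)

theorem rho_inj (π : G →* A × B) (l : ZMod k) :
    Function.Injective (rhoHom G A B φ k π l) := by
  intro x y h
  have h' : dmap G A B φ k π (l - l) x = dmap G A B φ k π (l - l) y := congrFun h l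
  rw [sub_self] at h'
  simpa [dmap] using h'

theorem rho_rel (hk : 3 ≤ k) (π : G →* A × B) (hπA : ∀ a : A, π (a : G) = (a, 1))
    (hπB : ∀ b : B, π (b : G) = (1, b)) (l : ZMod k) (b : B) :
    rhoHom G A B φ k π l (b : G) = rhoHom G A B φ k π (l + 1) ((φ b : G)) := by
  funext i
  show dmap G A B φ k π (i - l) (b : G) = dmap G A B φ k π (i - (l + 1)) ((φ b : G))
  rw [dmap_key G A B φ k hk π hπA hπB (i - l) b, sub_add_eq_sub_sub]


/-- **Proposition.** If there is `π : G → A × B` with `π(a) = (a,1)` and `π(b) = (1,b)`, then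
for every `k ≥ 3` there are homomorphisms `μ̄ : bar-Hig_k(G,φ) → G^k`, injective on each copy
of `G`, and `μ : Hig_k(G,φ) → C_k ⋉ G^k`, injective on `G`. -/
theorem exists_hom_to_power_and_semidirect
    (π : G →* A × B) (hπA : ∀ a : A, π (a : G) = (a, 1))
    (hπB : ∀ b : B, π (b : G) = (1, b)) (hk : 3 ≤ k) :
    (∃ μbar : BarHig G A B φ k →* (ZMod k → G),
        ∀ l : ZMod k, Function.Injective (μbar.comp (barHigIota G A B φ k l))) ∧
    (∃ μ : Hig G A B φ k →*
        SemidirectProduct (ZMod k → G) (Multiplicative (ZMod k)) (cycAut G k),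
        Function.Injective (μ.comp (higIota G A B φ k))) := by
  constructor
  · -- the map to `G^k`
    set F : Monoid.CoprodI (fun _ : ZMod k => G) →* (ZMod k → G) :=
      Monoid.CoprodI.lift (fun l : ZMod k => rhoHom G A B φ k π l) with hF
    have hker : barHigRels G A B φ k ⊆ (F.ker : Set _) := by
      intro x hx
      simp only [barHigRels, Set.mem_iUnion, Set.mem_singleton_iff] at hx
      obtain ⟨i, b, rfl⟩ := hx
      rw [SetLike.mem_coe, MonoidHom.mem_ker, map_mul, map_inv, hF,
        Monoid.CoprodI.lift_of, Monoid.CoprodI.lift_of,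
        rho_rel G A B φ k hk π hπA hπB i b, mul_inv_cancel]
    refine ⟨QuotientGroup.lift _ F
      (Subgroup.normalClosure_le_normal hker), ?_⟩
    intro l x y hxy
    have hx : ∀ g : G, (QuotientGroup.lift _ F
        (Subgroup.normalClosure_le_normal hker)).comp
        (barHigIota G A B φ k l) g = rhoHom G A B φ k π l g := by
      intro g
      show F (Monoid.CoprodI.of (M := fun _ : ZMod k => G) (i := l) g) = _
      rw [hF, Monoid.CoprodI.lift_of]
    have hxy := (hx x).symm.trans (hxy.trans (hx y))
    exact rho_inj G A B φ k π l hxy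
  · -- the map to the semidirect product
    set c : Multiplicative (ZMod k) := Multiplicative.ofAdd (1 : ZMod k) with hc
    set F2 : Monoid.Coprod G (FreeGroup Unit) →*
        SemidirectProduct (ZMod k → G) (Multiplicative (ZMod k)) (cycAut G k) :=
      Monoid.Coprod.lift (SemidirectProduct.inl.comp (rhoHom G A B φ k π 0))
        (FreeGroup.lift fun _ : Unit => SemidirectProduct.inr c) with hF2
    have hT : F2 (higT G) = SemidirectProduct.inr c := by
      rw [higT, hF2, Monoid.Coprod.lift_apply_inr, FreeGroup.lift_apply_of]
    have hconj : ∀ b : B,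
        (cycAut G k c) (rhoHom G A B φ k π 0 ((φ b : G))) = rhoHom G A B φ k π 0 (b : G) := by
      intro b
      funext i
      show rhoHom G A B φ k π 0 ((φ b : G)) (i - Multiplicative.toAdd c) = _
      have h1 : Multiplicative.toAdd c = (1 : ZMod k) := rfl
      rw [h1]
      show dmap G A B φ k π (i - 1 - 0) ((φ b : G)) = dmap G A B φ k π (i - 0) (b : G)
      rw [sub_zero, sub_zero]
      exact (dmap_key G A B φ k hk π hπA hπB i b).symm
    have hker : higRels G A B φ k ⊆ (F2.ker : Set _) := by
      intro x hx
      rw [higRels] at hx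
      rcases hx with hx | hx
      · rw [Set.mem_singleton_iff] at hx
        subst hx
        rw [SetLike.mem_coe, MonoidHom.mem_ker, map_pow, hT, ← map_pow]
        have hck : c ^ k = 1 := by
          rw [hc, ← ofAdd_nsmul, nsmul_eq_mul, mul_one, ZMod.natCast_self, ofAdd_zero]
        rw [hck, map_one]
      · simp only [Set.mem_iUnion, Set.mem_singleton_iff] at hx
        obtain ⟨b, rfl⟩ := hx
        rw [SetLike.mem_coe, MonoidHom.mem_ker, map_mul, map_mul, map_mul, map_inv, map_inv,
          hT, hF2, Monoid.Coprod.lift_apply_inl, Monoid.Coprod.lift_apply_inl,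
          MonoidHom.comp_apply, MonoidHom.comp_apply, ← hconj b,
          SemidirectProduct.inl_aut]
        simp only [map_inv]
        group
    refine ⟨QuotientGroup.lift _ F2
      (Subgroup.normalClosure_le_normal hker), ?_⟩
    intro x y hxy
    have hx : ∀ g : G, (QuotientGroup.lift _ F2
        (Subgroup.normalClosure_le_normal hker)).comp
        (higIota G A B φ k) g =
        SemidirectProduct.inl (rhoHom G A B φ k π 0 g) := by
      intro g
      show F2 (Monoid.Coprod.inl g) = _
      rw [hF2, Monoid.Coprod.lift_apply_inl, MonoidHom.comp_apply]
    have hxy := (hx x).symm.trans (hxy.trans (hx y))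
    exact rho_inj G A B φ k π 0 (SemidirectProduct.inl_injective hxy)
end

section
/- Let S be a finite subset of a group G, let m, n, q, r be non-negative integers with m, n ≥ 1, n = qm + r, q = ⌊n/m⌋ and 0 ≤ r < m, and let η > 0. If α: G → Sym(m) is an (S,η,m)-approximation of G, then the map β: G → Sym(n) obtained by letting β(g) act as α(g) on each of q pairwise disjoint blocks of size m partitioning the first qm points and as the identity on the remaining r points is an (S, η + 1/(q+1), n)-approximation of G. -/
/-- The block-diagonal permutation of `Fin n`, `n = q·m + r`: it acts as `σ` on each of the
`q` disjoint blocks of size `m` partitioning the first `q·m` points, and as the identity on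
the remaining `r` points. -/
def blockPerm {m q r n : ℕ} (h : n = q * m + r) (σ : Equiv.Perm (Fin m)) :
    Equiv.Perm (Fin n) :=
  ((Equiv.sumCongr (finProdFinEquiv (m := q) (n := m)) (Equiv.refl (Fin r))).trans
      (finSumFinEquiv.trans (finCongr h.symm))).permCongr
    (Equiv.sumCongr (Equiv.prodCongr (Equiv.refl (Fin q)) σ) (Equiv.refl (Fin r)))

lemma blockPerm_mul {m q r n : ℕ} (h : n = q * m + r) (σ τ : Equiv.Perm (Fin m)) :
    blockPerm h (σ * τ) = blockPerm h σ * blockPerm h τ := by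
  ext x
  simp only [blockPerm, Equiv.permCongr_apply, Equiv.Perm.mul_apply,
    Equiv.symm_apply_apply]
  congr 1
  rcases ((Equiv.sumCongr (finProdFinEquiv (m := q) (n := m)) (Equiv.refl (Fin r))).trans
      (finSumFinEquiv.trans (finCongr h.symm))).symm x with ⟨i, j⟩ | k <;>
    simp [Equiv.Perm.mul_apply]

lemma blockPerm_one {m q r n : ℕ} (h : n = q * m + r) :
    blockPerm h (1 : Equiv.Perm (Fin m)) = 1 := by
  ext x
  simp [blockPerm, Equiv.permCongr_apply]

lemma card_blockPerm_ne {m q r n : ℕ} (h : n = q * m + r) (σ τ : Equiv.Perm (Fin m)) :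
    (Finset.univ.filter fun i => blockPerm h σ i ≠ blockPerm h τ i).card
      = q * (Finset.univ.filter fun j => σ j ≠ τ j).card := by
  set e := ((Equiv.sumCongr (finProdFinEquiv (m := q) (n := m)) (Equiv.refl (Fin r))).trans
      (finSumFinEquiv.trans (finCongr h.symm))) with he
  have step1 : (Finset.univ.filter fun i => blockPerm h σ i ≠ blockPerm h τ i).card
      = (Finset.univ.filter fun x : (Fin q × Fin m) ⊕ Fin r =>
          (Equiv.sumCongr (Equiv.prodCongr (Equiv.refl (Fin q)) σ) (Equiv.refl (Fin r))) x ≠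
          (Equiv.sumCongr (Equiv.prodCongr (Equiv.refl (Fin q)) τ) (Equiv.refl (Fin r))) x).card := by
    apply Finset.card_bij' (fun i _ => e.symm i) (fun x _ => e x)
    · intro i hi
      simp only [Finset.mem_filter, Finset.mem_univ, true_and] at hi ⊢
      simp only [blockPerm, Equiv.permCongr_apply, ← he, ne_eq, EmbeddingLike.apply_eq_iff_eq] at hi
      exact hi
    · intro x hx
      simp only [Finset.mem_filter, Finset.mem_univ, true_and] at hx ⊢
      simp only [blockPerm, Equiv.permCongr_apply, ← he, Equiv.symm_apply_apply, ne_eq,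
        EmbeddingLike.apply_eq_iff_eq]
      exact hx
    · intro i _; exact e.apply_symm_apply i
    · intro x _; exact e.symm_apply_apply x
  rw [step1]
  have step2 : (Finset.univ.filter fun x : (Fin q × Fin m) ⊕ Fin r =>
          (Equiv.sumCongr (Equiv.prodCongr (Equiv.refl (Fin q)) σ) (Equiv.refl (Fin r))) x ≠
          (Equiv.sumCongr (Equiv.prodCongr (Equiv.refl (Fin q)) τ) (Equiv.refl (Fin r))) x)
      = ((Finset.univ ×ˢ (Finset.univ.filter fun j => σ j ≠ τ j)).map
          ⟨Sum.inl, Sum.inl_injective⟩) := by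
    ext x
    rcases x with ⟨i, j⟩ | k <;> simp [Prod.ext_iff]
  rw [step2, Finset.card_map, Finset.card_product, Finset.card_univ, Fintype.card_fin]

lemma permDist_blockPerm {m q r n : ℕ} (hn : 1 ≤ n) (h : n = q * m + r)
    (σ τ : Equiv.Perm (Fin m)) :
    permDist (blockPerm h σ) (blockPerm h τ)
      = ((q : ℝ) * (Finset.univ.filter fun j => σ j ≠ τ j).card) / n := by
  rw [permDist, card_blockPerm_ne]
  push_cast
  ring

/-- **Lemma.** If `n = qm + r` with `q = ⌊n/m⌋` and `α` is an `(S,η,m)`-approximation, then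
the block-diagonal map `g ↦ blockPerm (α g)` is an `(S, η + 1/(q+1), n)`-approximation. -/
theorem isApprox_blockPerm {G : Type*} [Group G] (S : Set G) (hS : S.Finite)
    {m n q r : ℕ} (hm : 1 ≤ m) (hn : 1 ≤ n) (h : n = q * m + r) (hq : q = n / m)
    (η : ℝ) (hη : 0 < η) (α : G → Equiv.Perm (Fin m)) (hα : IsApprox S η α) :
    IsApprox S (η + 1 / (q + 1)) (fun g => blockPerm h (α g)) := by
  have hm0 : (0:ℝ) < m := by exact_mod_cast hm
  have hn0 : (0:ℝ) < n := by exact_mod_cast hn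
  have hq1 : (0:ℝ) < (q:ℝ) + 1 := by positivity
  have hr : r < m := by
    have h1 := Nat.div_add_mod n m
    rw [← hq] at h1
    have h2 : q * m + r = q * m + n % m := by
      rw [← h, mul_comm]; exact h1.symm
    have h3 : r = n % m := Nat.add_left_cancel h2
    rw [h3]
    exact Nat.mod_lt n (by omega)
  have h2 : ((q:ℝ) * m + r = n) := by exact_mod_cast congrArg Nat.cast h.symm
  have hr' : (r:ℝ) < m := by exact_mod_cast hr
  have hr0 : (0:ℝ) ≤ r := Nat.cast_nonneg _
  have hq0 : (0:ℝ) ≤ q := Nat.cast_nonneg _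
  -- the block distance is at most the original distance
  have key_le : ∀ σ τ : Equiv.Perm (Fin m),
      permDist (blockPerm h σ) (blockPerm h τ) ≤ permDist σ τ := by
    intro σ τ
    rw [permDist_blockPerm hn h, permDist, div_le_div_iff₀ hn0 hm0]
    have hc0 : (0:ℝ) ≤ ((Finset.univ.filter fun j => σ j ≠ τ j).card : ℝ) := Nat.cast_nonneg _
    nlinarith [mul_le_mul_of_nonneg_left (le_of_eq h2.symm)
      (hc0 : (0:ℝ) ≤ ((Finset.univ.filter fun j => σ j ≠ τ j).card : ℝ))]
  constructor
  · intro g hg h' hh' hgh'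
    have := hα.1 g hg h' hh' hgh'
    have heq : (blockPerm h (α g)) * (blockPerm h (α h')) = blockPerm h (α g * α h') :=
      (blockPerm_mul h _ _).symm
    calc permDist (blockPerm h (α g) * blockPerm h (α h')) (blockPerm h (α (g * h')))
        = permDist (blockPerm h (α g * α h')) (blockPerm h (α (g * h'))) := by rw [heq]
      _ ≤ permDist (α g * α h') (α (g * h')) := key_le _ _
      _ < η := this
      _ < η + 1 / (q + 1) := by
          have : (0:ℝ) < 1 / ((q:ℝ) + 1) := by positivity
          linarith
  · intro g hg hg1
    have hdist := hα.2 g hg hg1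
    rw [permDist] at hdist
    set c := (Finset.univ.filter fun j => α g j ≠ (1 : Equiv.Perm (Fin m)) j).card with hcdef
    have hc : (1 - η) * m < c := by
      rw [lt_div_iff₀ hm0] at hdist
      exact hdist
    show 1 - (η + 1 / ((q:ℝ) + 1)) < permDist (blockPerm h (α g)) 1
    have h1 : permDist (blockPerm h (α g)) 1 = ((q : ℝ) * c) / n := by
      rw [← blockPerm_one h, permDist_blockPerm hn h]
    rw [h1, lt_div_iff₀ hn0]
    rcases Nat.eq_zero_or_pos q with hq' | hq'
    · subst hq'
      push_cast
      nlinarith [mul_pos hη hn0]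
    · have hq2 : (0:ℝ) < q := by exact_mod_cast hq'
      have hu : (1:ℝ) - (η + 1/((q:ℝ)+1)) = ((q:ℝ) - η*((q:ℝ)+1))/((q:ℝ)+1) := by
        field_simp
        ring
      rw [hu, div_mul_eq_mul_div, div_lt_iff₀ hq1]
      nlinarith [(by rw [← h2] : ((q:ℝ) - η*((q:ℝ)+1)) * ((q:ℝ)*m+r) = ((q:ℝ) - η*((q:ℝ)+1)) * n),
        mul_lt_mul_of_pos_left hc (mul_pos hq2 hq1),
        mul_lt_mul_of_pos_left hr' hq2,
        mul_nonneg (mul_nonneg hη.le hq1.le) hr0]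
end
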